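/- arXiv:2605.12812 — 2 statements merged into one kernel-verified Lean document; each statement's English description precedes it below -/
import Mathlib

section
/- Fix a capacity S > 0 and an instance D having m distinct item sizes c_1, …, c_m ∈ (0, S] with multiplicities n_1, …, n_m ≥ 1, and let k ≥ 1. A feasible configuration is a vector a ∈ ℕ^m with a_i ≤ n_i for all i and ∑_i a_i·c_i ≤ S; let A be the m×t matrix whose columns are the feasible configurations. Let LIN(D_k) be the optimal value of the linear program: minimize 1·x over real vectors x ≥ 0 with A·x = k·n (where n = (n_1,…,n_m)). Then V(D_k) ≤ S·LIN(D_k) ≤ S·OPT(D_k) ≤ S·LIN(D_k) + S·(m + k)/2, where V(D_k) = k·∑_i n_i·c_i is the total size of all item copies. -/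
open Finset

/-- number of t < d with (s+t) % n = p -/
def gcnt (n p s d : ℕ) : ℕ := ((Finset.range d).filter (fun t => (s + t) % n = p)).card

lemma mod_window_inj {n d s : ℕ} (hd : d ≤ n) {t₁ t₂ : ℕ} (h₁ : t₁ < d) (h₂ : t₂ < d)
    (h : (s + t₁) % n = (s + t₂) % n) : t₁ = t₂ := by
  rcases le_total t₁ t₂ with hle | hle
  · have hm : t₁ ≡ t₂ [MOD n] := Nat.ModEq.add_left_cancel' s h
    have hdvd := (Nat.modEq_iff_dvd' hle).mp hm
    rcases Nat.eq_zero_or_pos (t₂ - t₁) with h0 | hp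
    · omega
    · have := Nat.le_of_dvd hp hdvd; omega
  · have hm : t₂ ≡ t₁ [MOD n] := Nat.ModEq.add_left_cancel' s h.symm
    have hdvd := (Nat.modEq_iff_dvd' hle).mp hm
    rcases Nat.eq_zero_or_pos (t₁ - t₂) with h0 | hp
    · omega
    · have := Nat.le_of_dvd hp hdvd; omega

lemma gcnt_add (n p s d₁ d₂ : ℕ) : gcnt n p s (d₁ + d₂) = gcnt n p s d₁ + gcnt n p (s + d₁) d₂ := by
  induction d₂ with
  | zero => simp [gcnt]
  | succ d ih =>
    have h1 : d₁ + (d + 1) = (d₁ + d) + 1 := by omega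
    rw [h1]
    unfold gcnt at *
    rw [Finset.range_add_one, Finset.range_add_one, Finset.filter_insert, Finset.filter_insert]
    have harith : s + (d₁ + d) = s + d₁ + d := by omega
    by_cases hcond : (s + (d₁ + d)) % n = p
    · have hcond' : (s + d₁ + d) % n = p := by rwa [harith] at hcond
      rw [if_pos hcond, if_pos hcond', Finset.card_insert_of_notMem (by simp),
        Finset.card_insert_of_notMem (by simp)]
      omega
    · have hcond' : ¬ (s + d₁ + d) % n = p := by rwa [harith] at hcond
      rw [if_neg hcond, if_neg hcond']
      omega

lemma gcnt_le_one {n d : ℕ} (p s : ℕ) (hd : d ≤ n) : gcnt n p s d ≤ 1 := by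
  apply Finset.card_le_one.mpr
  intro t₁ h₁ t₂ h₂
  simp only [Finset.mem_filter, Finset.mem_range] at h₁ h₂
  exact mod_window_inj hd h₁.1 h₂.1 (h₁.2.trans h₂.2.symm)

lemma gcnt_full {n p : ℕ} (s : ℕ) (hn : 0 < n) (hp : p < n) : gcnt n p s n = 1 := by
  -- image of range n under t ↦ (s+t)%n equals range n
  have hinj : Set.InjOn (fun t => (s + t) % n) (Finset.range n) := by
    intro t₁ h₁ t₂ h₂ h
    simp only [Finset.coe_range, Set.mem_Iio] at h₁ h₂
    exact mod_window_inj le_rfl h₁ h₂ h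
  have himg : (Finset.range n).image (fun t => (s + t) % n) = Finset.range n := by
    apply Finset.eq_of_subset_of_card_le
    · intro x hx
      simp only [Finset.mem_image] at hx
      obtain ⟨t, _, rfl⟩ := hx
      simp [Nat.mod_lt _ hn]
    · rw [Finset.card_image_of_injOn hinj]
  have hpmem : p ∈ (Finset.range n).image (fun t => (s + t) % n) := by
    rw [himg]; simpa using hp
  simp only [Finset.mem_image] at hpmem
  obtain ⟨t, ht, hteq⟩ := hpmem
  have h1 : 1 ≤ gcnt n p s n := by
    rw [Nat.one_le_iff_ne_zero, ← Nat.pos_iff_ne_zero]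
    apply Finset.card_pos.mpr
    exact ⟨t, Finset.mem_filter.mpr ⟨ht, hteq⟩⟩
  have h2 := gcnt_le_one (n := n) (d := n) p s le_rfl
  omega

lemma gcnt_mul {n p : ℕ} (hn : 0 < n) (hp : p < n) (k : ℕ) : gcnt n p 0 (k * n) = k := by
  induction k with
  | zero => simp [gcnt]
  | succ k ih =>
    have : (k+1) * n = k * n + n := by ring
    rw [this, gcnt_add, ih, gcnt_full _ hn hp]

lemma gcnt_list {α : Type*} (n p : ℕ) (f : α → ℕ) : ∀ (L : List α) (s : ℕ),
    ∑ j : Fin L.length, gcnt n p (s + ((L.take j).map f).sum) (f L[j]) = gcnt n p s ((L.map f).sum) := by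
  intro L
  induction L with
  | nil => simp [gcnt]
  | cons d L ih =>
    intro s
    simp only [List.length_cons]
    rw [Fin.sum_univ_succ]
    simp only [List.getElem_cons_zero, List.take_zero, List.map_nil, List.sum_nil,
      Nat.add_zero, List.map_cons, List.sum_cons]
    rw [gcnt_add]
    congr 1
    have := ih (s + f d)
    rw [← this]
    apply Finset.sum_congr rfl
    intro j _
    congr 1
    · simp [List.take_succ_cons]; omega
lemma sum_fiber {m : ℕ} {nn : Fin m → ℕ} (c : Fin m → ℝ)
    (b : Finset ((i : Fin m) × Fin (nn i))) :
    ∑ it ∈ b, c it.1 = ∑ i, ((b.filter (fun it => it.1 = i)).card : ℝ) * c i := by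
  rw [← Finset.sum_fiberwise (s := b) (g := Sigma.fst) (f := fun it => c it.1)]
  apply Finset.sum_congr rfl
  intro i _
  have : ∑ it ∈ b.filter (fun it => it.1 = i), c it.1
      = ∑ _it ∈ b.filter (fun it => it.1 = i), c i := by
    apply Finset.sum_congr rfl
    intro it hit
    simp only [Finset.mem_filter] at hit
    rw [hit.2]
  rw [this, Finset.sum_const, nsmul_eq_mul]

theorem realize_list {m : ℕ} {nn : Fin m → ℕ} (hnn : ∀ i, 1 ≤ nn i) (c : Fin m → ℝ) (S : ℝ)
    (k : ℕ) (L : List (Fin m → ℕ))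
    (hb : ∀ b ∈ L, ∀ i, b i ≤ nn i)
    (hsz : ∀ b ∈ L, ∑ i, (b i : ℝ) * c i ≤ S)
    (hcol : ∀ i, (L.map (fun b => b i)).sum = k * nn i) :
    ∃ B : Fin L.length → Finset ((i : Fin m) × Fin (nn i)),
      (∀ j, ∑ it ∈ B j, c it.1 ≤ S) ∧
      (∀ it : (i : Fin m) × Fin (nn i),
        (Finset.univ.filter fun j => it ∈ B j).card = k) := by
  classical
  set pref : ℕ → Fin m → ℕ := fun j i => ((L.take j).map (fun b => b i)).sum with hpref
  refine ⟨fun j => Finset.univ.filter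
    (fun it => 0 < gcnt (nn it.1) it.2.val (pref j.val it.1) (L[j] it.1)), ?_, ?_⟩
  · -- bin sizes
    intro j
    have hfib : ∀ i : Fin m,
        (((Finset.univ.filter (fun it : (i : Fin m) × Fin (nn i) =>
          0 < gcnt (nn it.1) it.2.val (pref j.val it.1) (L[j] it.1))).filter
            (fun it => it.1 = i)).card) = L[j] i := by
      intro i
      have hdn : L[j] i ≤ nn i := hb _ (List.getElem_mem _) i
      symm
      rw [← Finset.card_range (L[j] i)]
      apply Finset.card_bij (fun t ht => (⟨i, ⟨(pref j.val i + t) % nn i,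
        Nat.mod_lt _ (hnn i)⟩⟩ : (i : Fin m) × Fin (nn i)))
      · intro t ht
        simp only [Finset.mem_range] at ht
        refine Finset.mem_filter.mpr ⟨Finset.mem_filter.mpr ⟨Finset.mem_univ _, ?_⟩, rfl⟩
        apply Finset.card_pos.mpr
        exact ⟨t, Finset.mem_filter.mpr ⟨Finset.mem_range.mpr ht, rfl⟩⟩
      · intro t₁ h₁ t₂ h₂ heq
        simp only [Finset.mem_range] at h₁ h₂
        have := congrArg (fun it => it.2.val) heq
        -- careful: both have it.1 = i definitionally
        simp only at this
        exact mod_window_inj hdn h₁ h₂ this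
      · rintro ⟨i', p⟩ hmem
        simp only [Finset.mem_filter, Finset.mem_univ, true_and] at hmem
        obtain ⟨hpos, hfst⟩ := hmem
        subst hfst
        obtain ⟨t, htmem⟩ := Finset.card_pos.mp hpos
        simp only [Finset.mem_filter, Finset.mem_range] at htmem
        exact ⟨t, Finset.mem_range.mpr htmem.1,
          Sigma.ext rfl (heq_of_eq (Fin.ext htmem.2))⟩
    rw [sum_fiber c]
    calc ∑ i, (((Finset.univ.filter (fun it : (i : Fin m) × Fin (nn i) =>
          0 < gcnt (nn it.1) it.2.val (pref j.val it.1) (L[j] it.1))).filter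
            (fun it => it.1 = i)).card : ℝ) * c i
        = ∑ i, (L[j] i : ℝ) * c i := by
          apply Finset.sum_congr rfl; intro i _; rw [hfib i]
      _ ≤ S := hsz _ (List.getElem_mem _)
  · -- each item in exactly k bins
    rintro ⟨i, p⟩
    have hmem : ∀ j : Fin L.length,
        ((⟨i, p⟩ : (i : Fin m) × Fin (nn i)) ∈ Finset.univ.filter
          (fun it : (i : Fin m) × Fin (nn i) =>
            0 < gcnt (nn it.1) it.2.val (pref j.val it.1) (L[j] it.1)))
          ↔ 0 < gcnt (nn i) p.val (pref j.val i) (L[j] i) := by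
      intro j; simp
    rw [Finset.card_filter]
    have : ∀ j : Fin L.length,
        (if (⟨i, p⟩ : (i : Fin m) × Fin (nn i)) ∈ Finset.univ.filter
          (fun it : (i : Fin m) × Fin (nn i) =>
            0 < gcnt (nn it.1) it.2.val (pref j.val it.1) (L[j] it.1)) then 1 else 0)
          = gcnt (nn i) p.val (pref j.val i) (L[j] i) := by
      intro j
      rw [if_congr (hmem j) rfl rfl]
      have hle := gcnt_le_one (n := nn i) (d := L[j] i) p.val (pref j.val i)
        (hb _ (List.getElem_mem _) i)
      by_cases h : 0 < gcnt (nn i) p.val (pref j.val i) (L[j] i)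
      · rw [if_pos h]; omega
      · rw [if_neg h]; omega
    rw [Finset.sum_congr rfl (fun j _ => this j)]
    have := gcnt_list (nn i) p.val (fun b => b i) L 0
    simp only [zero_add] at this
    rw [this, hcol i]
    exact gcnt_mul (hnn i) p.isLt k
lemma list_sum_toList {α M : Type*} [AddCommMonoid M] (s : Finset α) (f : α → M) :
    (s.toList.map f).sum = ∑ i ∈ s, f i := by
  rw [Finset.sum, ← Multiset.sum_coe, ← Multiset.map_coe]
  rw [Finset.coe_toList]
lemma list_sum_flatMap {α M : Type*} [AddCommMonoid M] (l : List α) (g : α → List M) :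
    (l.flatMap g).sum = (l.map (fun x => (g x).sum)).sum := by
  induction l with
  | nil => simp
  | cons a l ih => simp [List.flatMap_cons, ih]

section Main
variable {m : ℕ} {nn : Fin m → ℕ} {c : Fin m → ℝ} {S : ℝ} {k : ℕ}

/-- configuration of a bin -/
def conf {m : ℕ} {nn : Fin m → ℕ} (b : Finset ((i : Fin m) × Fin (nn i))) : Fin m → ℕ :=
  fun i => (b.filter (fun it => it.1 = i)).card

lemma conf_le (b : Finset ((i : Fin m) × Fin (nn i))) (i : Fin m) : conf b i ≤ nn i := by
  unfold conf
  rw [← Finset.card_range (nn i)]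
  apply Finset.card_le_card_of_injOn (fun it => (it.2 : ℕ))
  · intro it hit
    have h1 := (Finset.mem_filter.mp hit).2
    simp only [Finset.mem_coe, Finset.mem_range]
    exact it.2.isLt.trans_eq (congrArg nn h1)
  · rintro ⟨i₁, p₁⟩ h₁ ⟨i₂, p₂⟩ h₂ h
    have e₁ : i₁ = i := (Finset.mem_filter.mp (Finset.mem_coe.mp h₁)).2
    have e₂ : i₂ = i := (Finset.mem_filter.mp (Finset.mem_coe.mp h₂)).2
    subst e₁; subst e₂
    exact Sigma.ext rfl (heq_of_eq (Fin.ext h))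

lemma conf_sum (b : Finset ((i : Fin m) × Fin (nn i))) :
    ∑ i, (conf b i : ℝ) * c i = ∑ it ∈ b, c it.1 := (sum_fiber c b).symm

lemma sigma_fiber_card (i : Fin m) :
    (Finset.univ.filter (fun it : (i : Fin m) × Fin (nn i) => it.1 = i)).card = nn i := by
  symm
  rw [← Fintype.card_fin (nn i), ← Finset.card_univ]
  apply Finset.card_bij (fun (p : Fin (nn i)) _ => (⟨i, p⟩ : (i : Fin m) × Fin (nn i)))
  · intro p _
    simp
  · intro p₁ _ p₂ _ h
    have := congrArg (fun it : (i : Fin m) × Fin (nn i) => (it.2 : ℕ)) h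
    exact Fin.ext this
  · rintro ⟨i', p⟩ hmem
    have : i' = i := (Finset.mem_filter.mp hmem).2
    subst this
    exact ⟨p, Finset.mem_univ _, rfl⟩

lemma packing_col_sum (q : ℕ) (B : Fin q → Finset ((i : Fin m) × Fin (nn i)))
    (hB2 : ∀ it : (i : Fin m) × Fin (nn i),
      (Finset.univ.filter fun j => it ∈ B j).card = k) (i : Fin m) :
    ∑ j, conf (B j) i = k * nn i := by
  classical
  have hrw : ∀ j, conf (B j) i
      = ∑ it ∈ Finset.univ.filter (fun it : (i : Fin m) × Fin (nn i) => it.1 = i),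
          if it ∈ B j then 1 else 0 := by
    intro j
    rw [← Finset.card_filter]
    unfold conf
    congr 1
    ext it
    simp only [Finset.mem_filter, Finset.mem_univ, true_and]
    tauto
  rw [Finset.sum_congr rfl (fun j _ => hrw j), Finset.sum_comm]
  have : ∀ it ∈ Finset.univ.filter (fun it : (i : Fin m) × Fin (nn i) => it.1 = i),
      (∑ j, if it ∈ B j then 1 else 0) = k := by
    intro it _
    rw [← Finset.card_filter]
    exact hB2 it
  rw [Finset.sum_congr rfl this, Finset.sum_const, sigma_fiber_card, smul_eq_mul, mul_comm]

lemma packing_mem_lin (q : ℕ) (B : Fin q → Finset ((i : Fin m) × Fin (nn i)))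
    (hB1 : ∀ j, ∑ it ∈ B j, c it.1 ≤ S)
    (hB2 : ∀ it : (i : Fin m) × Fin (nn i),
      (Finset.univ.filter fun j => it ∈ B j).card = k) :
    ∃ x : (Fin m → ℕ) → ℝ, (∀ a, 0 ≤ x a) ∧
      (∀ a, x a ≠ 0 → (∀ i, a i ≤ nn i) ∧ ∑ i, (a i : ℝ) * c i ≤ S) ∧
      (Function.support x).Finite ∧
      (∀ i, ∑ᶠ a, x a * (a i : ℝ) = (k : ℝ) * (nn i : ℝ)) ∧
      ((q : ℝ) = ∑ᶠ a, x a) := by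
  classical
  set T := Finset.image (fun j => conf (B j)) Finset.univ with hT
  set x := fun a => ((Finset.univ.filter (fun j : Fin q => conf (B j) = a)).card : ℝ) with hx
  have hxmem : ∀ a, x a ≠ 0 → ∃ j, conf (B j) = a := by
    intro a ha
    have : (Finset.univ.filter (fun j : Fin q => conf (B j) = a)).card ≠ 0 := by
      intro h; apply ha; rw [hx]; simp [h]
    obtain ⟨j, hj⟩ := Finset.card_pos.mp (Nat.pos_of_ne_zero this)
    exact ⟨j, (Finset.mem_filter.mp hj).2⟩
  have hsupp : Function.support x ⊆ ↑T := by
    intro a ha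
    obtain ⟨j, hj⟩ := hxmem a ha
    exact Finset.mem_coe.mpr (Finset.mem_image.mpr ⟨j, Finset.mem_univ _, hj⟩)
  refine ⟨x, fun a => Nat.cast_nonneg _, ?_, Set.Finite.subset T.finite_toSet hsupp, ?_, ?_⟩
  · intro a ha
    obtain ⟨j, hj⟩ := hxmem a ha
    subst hj
    exact ⟨conf_le _, le_of_eq_of_le (conf_sum _) (hB1 j)⟩
  · intro i
    have hs1 : Function.support (fun a : Fin m → ℕ => x a * (a i : ℝ)) ⊆ ↑T := by
      intro a ha
      apply hsupp
      intro h0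
      apply ha
      simp only [Function.mem_support] at *
      rw [h0, zero_mul]
    rw [finsum_eq_finset_sum_of_support_subset _ hs1]
    have step : ∀ a ∈ T, x a * (a i : ℝ)
        = ∑ j ∈ Finset.univ.filter (fun j : Fin q => conf (B j) = a), (conf (B j) i : ℝ) := by
      intro a _
      rw [Finset.sum_congr rfl (fun j hj => by
        rw [(Finset.mem_filter.mp hj).2])]
      rw [Finset.sum_const, nsmul_eq_mul, hx]
    rw [Finset.sum_congr rfl step,
      Finset.sum_fiberwise_of_maps_to (fun j _ => Finset.mem_image.mpr ⟨j, Finset.mem_univ _, rfl⟩)]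
    rw [← Nat.cast_sum]
    rw [packing_col_sum q B hB2 i]
    push_cast
    ring
  · rw [finsum_eq_finset_sum_of_support_subset _ hsupp]
    rw [hx]
    rw [← Nat.cast_sum]
    congr 1
    calc q = (Finset.univ : Finset (Fin q)).card := by simp
      _ = _ := Finset.card_eq_sum_card_fiberwise
        (fun j _ => Finset.mem_image.mpr ⟨j, Finset.mem_univ _, rfl⟩)

lemma opt_nonempty (hnn : ∀ i, 1 ≤ nn i) (hc : ∀ i, 0 < c i ∧ c i ≤ S) :
    {q | ∃ B : Fin q → Finset ((i : Fin m) × Fin (nn i)),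
      (∀ j, ∑ it ∈ B j, c it.1 ≤ S) ∧
      (∀ it : (i : Fin m) × Fin (nn i),
        (Finset.univ.filter fun j => it ∈ B j).card = k)}.Nonempty := by
  classical
  set u : Fin m → (Fin m → ℕ) := fun i i' => if i' = i then 1 else 0 with hu
  set L : List (Fin m → ℕ) :=
    (List.finRange m).flatMap (fun i => List.replicate (k * nn i) (u i)) with hL
  have hbmem : ∀ b ∈ L, ∃ i, b = u i := by
    intro b hb
    rw [hL, List.mem_flatMap] at hb
    obtain ⟨i, _, hrep⟩ := hb
    exact ⟨i, List.eq_of_mem_replicate hrep⟩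
  have hhb : ∀ b ∈ L, ∀ i', b i' ≤ nn i' := by
    intro b hb i'
    obtain ⟨i, rfl⟩ := hbmem b hb
    by_cases h : i' = i
    · simpa [hu, h] using hnn i'
    · simp [hu, h]
  have hhsz : ∀ b ∈ L, ∑ i', ((b i' : ℕ) : ℝ) * c i' ≤ S := by
    intro b hb
    obtain ⟨i, rfl⟩ := hbmem b hb
    have : ∑ i', ((u i i' : ℕ) : ℝ) * c i' = c i := by
      rw [hu]
      simp [ite_mul]
    rw [this]
    exact (hc i).2
  have hhcol : ∀ i', (L.map (fun b => b i')).sum = k * nn i' := by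
    intro i'
    rw [hL, List.map_flatMap, list_sum_flatMap]
    have : ∀ i, ((List.replicate (k * nn i) (u i)).map (fun b => b i')).sum
        = (k * nn i) * (if i' = i then 1 else 0) := by
      intro i
      rw [List.map_replicate, List.sum_replicate, smul_eq_mul, hu]
    have hcalc : (List.map (fun x => (List.map (fun b => b i') (List.replicate (k * nn x) (u x))).sum)
          (List.finRange m)).sum
        = ((List.finRange m).map (fun i => (k * nn i) * (if i' = i then 1 else 0))).sum := by
      congr 1
      apply List.map_congr_left
      intro i _
      exact this i
    rw [hcalc, ← Fin.sum_univ_def]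
    simp
  obtain ⟨B, h1, h2⟩ := realize_list hnn c S k L hhb hhsz hhcol
  exact ⟨L.length, B, h1, h2⟩

lemma lin_member_lb (hS : 0 < S) (x : (Fin m → ℕ) → ℝ)
    (hx0 : ∀ a, 0 ≤ x a)
    (hx1 : ∀ a, x a ≠ 0 → (∀ i, a i ≤ nn i) ∧ ∑ i, (a i : ℝ) * c i ≤ S)
    (hx2 : (Function.support x).Finite)
    (hx3 : ∀ i, ∑ᶠ a, x a * (a i : ℝ) = (k : ℝ) * (nn i : ℝ)) :
    (k : ℝ) * ∑ i, (nn i : ℝ) * c i ≤ S * (∑ᶠ a, x a) ∧ 0 ≤ ∑ᶠ a, x a := by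
  classical
  set T := hx2.toFinset with hT
  have hsub : Function.support x ⊆ ↑T := by rw [hT]; simp
  have hsum : ∑ᶠ a, x a = ∑ a ∈ T, x a := finsum_eq_finset_sum_of_support_subset _ hsub
  constructor
  · have key : ∀ i, ∑ a ∈ T, x a * (a i : ℝ) = (k : ℝ) * (nn i : ℝ) := by
      intro i
      rw [← hx3 i]
      symm
      apply finsum_eq_finset_sum_of_support_subset
      intro a ha
      apply hsub
      intro h0
      apply ha
      simp only [Function.mem_support] at *
      rw [h0, zero_mul]
    have lhs : (k : ℝ) * ∑ i, (nn i : ℝ) * c i = ∑ a ∈ T, x a * ∑ i, (a i : ℝ) * c i := by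
      have e1 : ∀ i ∈ Finset.univ, (k : ℝ) * ((nn i : ℝ) * c i)
          = ∑ a ∈ T, x a * (a i : ℝ) * c i := by
        intro i _
        rw [← Finset.sum_mul, key i]; ring
      rw [Finset.mul_sum, Finset.sum_congr rfl e1, Finset.sum_comm]
      apply Finset.sum_congr rfl
      intro a _
      rw [Finset.mul_sum]
      apply Finset.sum_congr rfl
      intro i _
      ring
    rw [lhs, hsum, Finset.mul_sum]
    apply Finset.sum_le_sum
    intro a _
    by_cases h0 : x a = 0
    · rw [h0]; simp
    · rw [mul_comm S (x a)]
      exact mul_le_mul_of_nonneg_left (hx1 a h0).2 (hx0 a)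
  · rw [hsum]
    exact Finset.sum_nonneg (fun a _ => hx0 a)

end Main

section Reduce
variable {m : ℕ} {nn : Fin m → ℕ} {c : Fin m → ℝ} {S : ℝ} {k : ℕ}

/-- no nontrivial nonnegative relation among nonzero nat-vectors -/
lemma no_nonneg_relation (T₀ : Finset (Fin m → ℕ)) (hnz : ∀ a ∈ T₀, a ≠ 0)
    (lam : (Fin m → ℕ) → ℝ) (hrel : ∀ i, ∑ a ∈ T₀, lam a * (a i : ℝ) = 0)
    (hpos : ∀ a ∈ T₀, 0 ≤ lam a) : ∀ a ∈ T₀, lam a = 0 := by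
  by_contra hcon
  push_neg at hcon
  obtain ⟨a₀, ha₀T, ha₀⟩ := hcon
  have ha₀pos : 0 < lam a₀ := lt_of_le_of_ne (hpos a₀ ha₀T) (Ne.symm ha₀)
  obtain ⟨i, hi⟩ := Function.ne_iff.mp (hnz a₀ ha₀T)
  have hi' : 0 < a₀ i := Nat.pos_of_ne_zero (by simpa using hi)
  have : 0 < ∑ a ∈ T₀, lam a * (a i : ℝ) := by
    apply Finset.sum_pos'
    · intro a ha
      exact mul_nonneg (hpos a ha) (Nat.cast_nonneg _)
    · exact ⟨a₀, ha₀T, mul_pos ha₀pos (by exact_mod_cast hi')⟩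
  rw [hrel i] at this
  exact lt_irrefl _ this

lemma support_reduce : ∀ (N : ℕ) (x : (Fin m → ℕ) → ℝ) (T : Finset (Fin m → ℕ)),
    T.card ≤ N →
    (Function.support x ⊆ ↑T) →
    (∀ a, 0 ≤ x a) →
    (∀ a, x a ≠ 0 → (∀ i, a i ≤ nn i) ∧ ∑ i, (a i : ℝ) * c i ≤ S) →
    (∀ i, ∑ a ∈ T, x a * (a i : ℝ) = (k : ℝ) * (nn i : ℝ)) →
    ∃ (x' : (Fin m → ℕ) → ℝ) (T' : Finset (Fin m → ℕ)),
      T'.card ≤ m ∧ (Function.support x' ⊆ ↑T') ∧ (∀ a ∈ T', 0 < x' a) ∧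
      (∀ a, 0 ≤ x' a) ∧
      (∀ a ∈ T', (∀ i, a i ≤ nn i) ∧ ∑ i, (a i : ℝ) * c i ≤ S) ∧
      (∀ a ∈ T', a ≠ 0) ∧
      (∀ i, ∑ a ∈ T', x' a * (a i : ℝ) = (k : ℝ) * (nn i : ℝ)) ∧
      ∑ a ∈ T', x' a ≤ ∑ a ∈ T, x a := by
  intro N
  induction N with
  | zero =>
    intro x T hcard hsupp hx0 hx1 hx2
    -- T is empty
    have hT : T = ∅ := Finset.card_eq_zero.mp (Nat.le_zero.mp hcard)
    refine ⟨fun _ => 0, ∅, by simp, by simp, by simp, by simp, by simp, by simp, ?_,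
      by simpa using Finset.sum_nonneg (fun a _ => hx0 a)⟩
    intro i
    have := hx2 i
    rw [hT] at this
    simpa using this.symm
  | succ N ih =>
    intro x T hcard hsupp hx0 hx1 hx2
    classical
    -- normalize
    set T₀ := T.filter (fun a => x a ≠ 0 ∧ a ≠ 0) with hT₀def
    set x₀ : (Fin m → ℕ) → ℝ := fun a => if a ∈ T₀ then x a else 0 with hx₀def
    have hT₀sub : T₀ ⊆ T := Finset.filter_subset _ _
    have hx₀eq : ∀ a ∈ T₀, x₀ a = x a := fun a ha => if_pos ha
    have hx₀supp : Function.support x₀ ⊆ ↑T₀ := by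
      intro a ha
      simp only [Function.mem_support, hx₀def] at ha
      by_contra hmem
      exact ha (if_neg hmem)
    have hx₀0 : ∀ a, 0 ≤ x₀ a := by
      intro a
      rw [hx₀def]
      dsimp only
      split
      · exact hx0 a
      · exact le_refl 0
    have hT₀prop : ∀ a ∈ T₀, x a ≠ 0 ∧ a ≠ 0 := by
      intro a ha
      exact (Finset.mem_filter.mp ha).2
    have hx₀pos : ∀ a ∈ T₀, 0 < x₀ a := by
      intro a ha
      rw [hx₀eq a ha]
      exact lt_of_le_of_ne (hx0 a) (Ne.symm (hT₀prop a ha).1)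
    have hx₀cons : ∀ i, ∑ a ∈ T₀, x₀ a * (a i : ℝ) = (k : ℝ) * (nn i : ℝ) := by
      intro i
      rw [← hx2 i]
      rw [Finset.sum_congr rfl (fun a ha => by rw [hx₀eq a ha])]
      apply Finset.sum_subset hT₀sub
      intro a haT hanT₀
      rw [hT₀def, Finset.mem_filter] at hanT₀
      push_neg at hanT₀
      by_cases hxa : x a = 0
      · rw [hxa, zero_mul]
      · have : a = 0 := hanT₀ haT hxa
        rw [this]
        norm_num
    have hx₀le : ∑ a ∈ T₀, x₀ a ≤ ∑ a ∈ T, x a := by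
      rw [Finset.sum_congr rfl (fun a ha => by rw [hx₀eq a ha])]
      exact Finset.sum_le_sum_of_subset_of_nonneg hT₀sub (fun a _ _ => hx0 a)
    by_cases hsmall : T₀.card ≤ m
    · exact ⟨x₀, T₀, hsmall, hx₀supp, hx₀pos, hx₀0,
        fun a ha => hx1 a (hT₀prop a ha).1, fun a ha => (hT₀prop a ha).2, hx₀cons, hx₀le⟩
    -- linear dependence
    push_neg at hsmall
    set ψ : (Fin m → ℕ) → (Fin m → ℝ) := fun a i => (a i : ℝ) with hψ
    have hψinj : Function.Injective ψ := by
      intro a b h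
      funext i
      have h2 : ((a i : ℝ)) = ((b i : ℝ)) := congrFun h i
      exact_mod_cast h2
    have htcard : Module.finrank ℝ (Fin m → ℝ) < (T₀.image ψ).card := by
      rw [Finset.card_image_of_injective _ hψinj, Module.finrank_pi, Fintype.card_fin]
      exact hsmall
    obtain ⟨f, hrel, e₀, he₀mem, he₀⟩ :=
      Module.exists_nontrivial_relation_of_finrank_lt_card htcard
    set lam : (Fin m → ℕ) → ℝ := fun a => f (ψ a) with hlam
    have hrelT : ∀ i, ∑ a ∈ T₀, lam a * (a i : ℝ) = 0 := by
      intro i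
      have h1 : ∑ e ∈ T₀.image ψ, f e • e = 0 := hrel
      have h2 := congrFun h1 i
      rw [Finset.sum_apply] at h2
      rw [Finset.sum_image (fun a _ b _ h => hψinj h)] at h2
      simpa using h2
    have hex : ∃ a ∈ T₀, lam a ≠ 0 := by
      obtain ⟨a, haT, hae⟩ := Finset.mem_image.mp he₀mem
      exact ⟨a, haT, by rw [hlam]; dsimp only; rw [hae]; exact he₀⟩
    have hnz : ∀ a ∈ T₀, a ≠ 0 := fun a ha => (hT₀prop a ha).2
    -- both signs exist
    have hposex : ∃ a ∈ T₀, 0 < lam a := by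
      by_contra hcon
      push_neg at hcon
      have := no_nonneg_relation T₀ hnz (fun a => -lam a)
        (fun i => by rw [← neg_zero, ← hrelT i, ← Finset.sum_neg_distrib]
                     apply Finset.sum_congr rfl; intro a _; ring)
        (fun a ha => neg_nonneg.mpr (hcon a ha))
      obtain ⟨a, haT, ha⟩ := hex
      exact ha (by have h2 : -lam a = 0 := this a haT; linarith)
    have hnegex : ∃ a ∈ T₀, lam a < 0 := by
      by_contra hcon
      push_neg at hcon
      have := no_nonneg_relation T₀ hnz lam hrelT hcon
      obtain ⟨a, haT, ha⟩ := hex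
      exact ha (this a haT)
    -- orient so that sum is nonnegative
    obtain ⟨mu, hmurel, hmusum, hmupos⟩ :
        ∃ mu : (Fin m → ℕ) → ℝ, (∀ i, ∑ a ∈ T₀, mu a * (a i : ℝ) = 0) ∧
          0 ≤ ∑ a ∈ T₀, mu a ∧ ∃ a ∈ T₀, 0 < mu a := by
      rcases le_total 0 (∑ a ∈ T₀, lam a) with hle | hle
      · exact ⟨lam, hrelT, hle, hposex⟩
      · refine ⟨fun a => -lam a, ?_, ?_, ?_⟩
        · intro i
          rw [← neg_zero, ← hrelT i, ← Finset.sum_neg_distrib]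
          apply Finset.sum_congr rfl; intro a _; ring
        · rw [Finset.sum_neg_distrib]
          simpa using hle
        · obtain ⟨a, haT, ha⟩ := hnegex
          exact ⟨a, haT, by simpa using ha⟩
    set P := T₀.filter (fun a => 0 < mu a) with hP
    have hPne : P.Nonempty := by
      obtain ⟨a, haT, ha⟩ := hmupos
      exact ⟨a, Finset.mem_filter.mpr ⟨haT, ha⟩⟩
    obtain ⟨astar, hastarP, hmin⟩ := Finset.exists_min_image P (fun a => x₀ a / mu a) hPne
    have hastarT : astar ∈ T₀ := (Finset.mem_filter.mp hastarP).1
    have hmustar : 0 < mu astar := (Finset.mem_filter.mp hastarP).2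
    set t := x₀ astar / mu astar with htdef
    have ht0 : 0 < t := div_pos (hx₀pos astar hastarT) hmustar
    set x₁ : (Fin m → ℕ) → ℝ := fun a => if a ∈ T₀ then x₀ a - t * mu a else 0 with hx₁def
    have hx₁0 : ∀ a, 0 ≤ x₁ a := by
      intro a
      rw [hx₁def]
      dsimp only
      split
      · next ha =>
        by_cases hmu : 0 < mu a
        · have hle := hmin a (Finset.mem_filter.mpr ⟨ha, hmu⟩)
          rw [div_le_div_iff₀ hmustar hmu] at hle
          have h2 : t * mu a ≤ x₀ a := by
            rw [htdef, div_mul_eq_mul_div, div_le_iff₀ hmustar]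
            linarith [hle]
          linarith
        · push_neg at hmu
          have : 0 ≤ -(t * mu a) := by
            rw [neg_nonneg]
            exact mul_nonpos_of_nonneg_of_nonpos (le_of_lt ht0) hmu
          have := hx₀0 a
          linarith
      · exact le_refl 0
    have hx₁star : x₁ astar = 0 := by
      rw [hx₁def]
      dsimp only
      rw [if_pos hastarT, htdef]
      field_simp
      ring
    have hx₁supp : Function.support x₁ ⊆ ↑(T₀.erase astar) := by
      intro a ha
      simp only [Function.mem_support] at ha
      rw [Finset.coe_erase]
      constructor
      · by_contra hmem
        exact ha (by rw [hx₁def]; exact if_neg hmem)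
      · intro heq
        rw [Set.mem_singleton_iff.mp heq] at ha
        exact ha hx₁star
    have hx₁eq : ∀ a ∈ T₀, x₁ a = x₀ a - t * mu a := by
      intro a ha
      rw [hx₁def]
      exact if_pos ha
    have hx₁cons : ∀ i, ∑ a ∈ T₀.erase astar, x₁ a * (a i : ℝ) = (k : ℝ) * (nn i : ℝ) := by
      intro i
      rw [Finset.sum_erase _ (by rw [hx₁star, zero_mul])]
      rw [Finset.sum_congr rfl (fun a ha => by rw [hx₁eq a ha])]
      have : ∑ a ∈ T₀, (x₀ a - t * mu a) * (a i : ℝ)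
          = ∑ a ∈ T₀, x₀ a * (a i : ℝ) - t * ∑ a ∈ T₀, mu a * (a i : ℝ) := by
        rw [Finset.mul_sum, ← Finset.sum_sub_distrib]
        apply Finset.sum_congr rfl; intro a _; ring
      rw [this, hmurel i, hx₀cons i]
      ring
    have hx₁val : ∑ a ∈ T₀.erase astar, x₁ a ≤ ∑ a ∈ T, x a := by
      rw [Finset.sum_erase _ hx₁star]
      rw [Finset.sum_congr rfl (fun a ha => by rw [hx₁eq a ha])]
      rw [Finset.sum_sub_distrib]
      have h1 : 0 ≤ t * ∑ a ∈ T₀, mu a := mul_nonneg (le_of_lt ht0) hmusum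
      rw [← Finset.mul_sum]
      linarith [hx₀le]
    have hcard₁ : (T₀.erase astar).card ≤ N := by
      rw [Finset.card_erase_of_mem hastarT]
      have := Finset.card_le_card hT₀sub
      omega
    have hx₁feas : ∀ a, x₁ a ≠ 0 → (∀ i, a i ≤ nn i) ∧ ∑ i, (a i : ℝ) * c i ≤ S := by
      intro a ha
      have : a ∈ T₀ := by
        by_contra hmem
        exact ha (by rw [hx₁def]; exact if_neg hmem)
      exact hx1 a (hT₀prop a this).1
    obtain ⟨x', T', h1, h2, h3, h4, h5, h6, h7, h8⟩ :=
      ih x₁ (T₀.erase astar) hcard₁ hx₁supp hx₁0 hx₁feas hx₁cons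
    exact ⟨x', T', h1, h2, h3, h4, h5, h6, h7, le_trans h8 hx₁val⟩

end Reduce

section PBins
variable {m : ℕ} {nn : Fin m → ℕ} {c : Fin m → ℝ} {S : ℝ} {k : ℕ}

lemma nat_split {α : Type*} [DecidableEq α] :
    ∀ (F : Finset α) (w : α → ℕ) (r : ℕ), r ≤ ∑ a ∈ F, w a →
    ∃ u : α → ℕ, (∀ a, u a ≤ w a) ∧ ∑ a ∈ F, u a = r := by
  intro F
  induction F using Finset.induction_on with
  | empty =>
    intro w r hr
    simp only [Finset.sum_empty, Nat.le_zero] at hr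
    exact ⟨fun _ => 0, fun a => Nat.zero_le _, by simp [hr]⟩
  | @insert a F ha ih =>
    intro w r hr
    rw [Finset.sum_insert ha] at hr
    set r₁ := min r (w a) with hr₁
    obtain ⟨u, hu1, hu2⟩ := ih w (r - r₁) (by omega)
    refine ⟨fun b => if b = a then r₁ else u b, ?_, ?_⟩
    · intro b
      by_cases h : b = a
      · subst h; simp only [eq_self_iff_true, if_true]; omega
      · simp only [if_neg h]; exact hu1 b
    · rw [Finset.sum_insert ha]
      simp only [eq_self_iff_true, if_true]
      have heq : ∑ b ∈ F, (if b = a then r₁ else u b) = ∑ b ∈ F, u b := by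
        apply Finset.sum_congr rfl
        intro b hb
        have hba : b ≠ a := fun h => ha (h ▸ hb)
        rw [if_neg hba]
      rw [heq, hu2]
      omega

lemma pbins (hc : ∀ i, 0 < c i ∧ c i ≤ S)
    (F : Finset (Fin m → ℕ))
    (hF : ∀ a ∈ F, (∀ i, a i ≤ nn i) ∧ ∑ i, (a i : ℝ) * c i ≤ S)
    (r : Fin m → ℕ) (hr : ∀ i, r i ≤ ∑ a ∈ F, a i) :
    ∃ L : List (Fin m → ℕ),
      (∀ b ∈ L, ∀ i, b i ≤ nn i) ∧ (∀ b ∈ L, ∑ i, (b i : ℝ) * c i ≤ S) ∧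
      (∀ i, (L.map (fun b => b i)).sum = r i) ∧ L.length = F.card := by
  classical
  have hui : ∀ i : Fin m, ∃ u : (Fin m → ℕ) → ℕ, (∀ a, u a ≤ a i) ∧ ∑ a ∈ F, u a = r i :=
    fun i => nat_split F (fun a => a i) (r i) (hr i)
  choose u hu1 hu2 using hui
  refine ⟨F.toList.map (fun a => fun i => u i a), ?_, ?_, ?_, by simp⟩
  · intro b hb
    rw [List.mem_map] at hb
    obtain ⟨a, haF, rfl⟩ := hb
    intro i
    exact le_trans (hu1 i a) ((hF a (Finset.mem_toList.mp haF)).1 i)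
  · intro b hb
    rw [List.mem_map] at hb
    obtain ⟨a, haF, rfl⟩ := hb
    have haF' := Finset.mem_toList.mp haF
    calc ∑ i, ((u i a : ℕ) : ℝ) * c i ≤ ∑ i, (a i : ℝ) * c i := by
          apply Finset.sum_le_sum
          intro i _
          exact mul_le_mul_of_nonneg_right (by exact_mod_cast hu1 i a) (le_of_lt (hc i).1)
      _ ≤ S := (hF a haF').2
  · intro i
    rw [List.map_map]
    have heq : (F.toList.map ((fun b => b i) ∘ (fun a => fun i => u i a))).sum
        = (F.toList.map (fun a => u i a)).sum := rfl
    rw [heq, list_sum_toList]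
    exact hu2 i

end PBins

section Greedy
variable {m : ℕ} {nn : Fin m → ℕ} {c : Fin m → ℝ} {S : ℝ} {k : ℕ}

lemma list_range_map_sum {M : Type*} [AddCommMonoid M] (n : ℕ) (f : ℕ → M) :
    ((List.range n).map f).sum = ∑ ℓ ∈ Finset.range n, f ℓ := by
  induction n with
  | zero => simp
  | succ n ih => rw [List.range_succ, Finset.sum_range_succ, List.map_append, List.sum_append, ih]; simp

lemma extract_bin (hS : 0 < S) (hc : ∀ i, 0 < c i ∧ c i ≤ S) (d : Fin m → ℕ)
    (hbig : S / 2 < ∑ i, (d i : ℝ) * c i) :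
    ∃ b : Fin m → ℕ, (∀ i, b i ≤ d i) ∧ S / 2 < ∑ i, (b i : ℝ) * c i ∧
      ∑ i, (b i : ℝ) * c i ≤ S := by
  classical
  by_cases hbigitem : ∃ i, 1 ≤ d i ∧ S / 2 < c i
  · obtain ⟨i, hdi, hci⟩ := hbigitem
    refine ⟨fun i' => if i' = i then 1 else 0, ?_, ?_⟩
    · intro i'
      by_cases h : i' = i
      · subst h; simpa using hdi
      · simp [h]
    · have hsum : ∑ i', ((if i' = i then (1:ℕ) else 0 : ℕ) : ℝ) * c i' = c i := by
        simp [ite_mul]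
      rw [hsum]
      exact ⟨hci, (hc i).2⟩
  · push_neg at hbigitem
    set W : Set ℕ := {n | ∃ b : Fin m → ℕ, (∀ i, b i ≤ d i) ∧ (∑ i, b i = n) ∧
      S / 2 < ∑ i, (b i : ℝ) * c i} with hW
    have hWne : W.Nonempty := ⟨∑ i, d i, d, fun i => le_refl _, rfl, hbig⟩
    obtain ⟨b, hbd, hbn, hbbig⟩ := Nat.sInf_mem hWne
    refine ⟨b, hbd, hbbig, ?_⟩
    have hbne : ∃ i, 1 ≤ b i := by
      by_contra hcon
      push_neg at hcon
      have : ∀ i, b i = 0 := fun i => by have := hcon i; omega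
      have hz : ∑ i, (b i : ℝ) * c i = 0 := by
        apply Finset.sum_eq_zero
        intro i _
        rw [this i]
        norm_num
      rw [hz] at hbbig
      linarith
    obtain ⟨i, hbi⟩ := hbne
    have hdi : 1 ≤ d i := le_trans hbi (hbd i)
    have hci : c i ≤ S / 2 := hbigitem i hdi
    set b' : Fin m → ℕ := fun i' => if i' = i then b i - 1 else b i' with hb'
    have hsum' : ∑ i', (b i' : ℝ) * c i' = ∑ i', (b' i' : ℝ) * c i' + c i := by
      have herm : ∀ i' ∈ Finset.univ, (b i' : ℝ) * c i'
          = (b' i' : ℝ) * c i' + (if i' = i then c i else 0) := by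
        intro i' _
        by_cases h : i' = i
        · subst h
          have hc1 : ((b i' - 1 : ℕ) : ℝ) = (b i' : ℝ) - 1 := by
            have h1 : (1:ℕ) ≤ b i' := hbi
            push_cast [Nat.cast_sub h1]
            ring
          rw [hb']
          simp only [eq_self_iff_true, if_true]
          rw [hc1]
          ring
        · rw [hb']
          simp [h]
      rw [Finset.sum_congr rfl herm, Finset.sum_add_distrib]
      simp
    have hb'small : ¬ (S / 2 < ∑ i', (b' i' : ℝ) * c i') := by
      intro hcon
      have hmem : (∑ i', b' i') ∈ W := by
        refine ⟨b', ?_, rfl, hcon⟩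
        intro i'
        rw [hb']
        by_cases h : i' = i
        · subst h; have h1 := hbd i'; simp only [hb', eq_self_iff_true, if_true]; omega
        · simp only [hb', if_neg h]; exact hbd i'
      have hlt : ∑ i', b' i' < sInf W := by
        rw [← hbn]
        have : ∑ i', b' i' + 1 ≤ ∑ i', b i' := by
          have h1 : b' i + 1 ≤ b i := by rw [hb']; simp only [eq_self_iff_true, if_true]; omega
          have h2 : ∀ i', b' i' ≤ b i' := by
            intro i'
            rw [hb']
            by_cases h : i' = i
            · subst h; simp
            · simp [h]
          calc ∑ i', b' i' + 1
              = ∑ i' ∈ Finset.univ.erase i, b' i' + (b' i + 1) := by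
                rw [← Finset.sum_erase_add Finset.univ b' (Finset.mem_univ i)]; ring
            _ ≤ ∑ i' ∈ Finset.univ.erase i, b i' + b i := by
                have := Finset.sum_le_sum (fun i' (_ : i' ∈ Finset.univ.erase i) => h2 i')
                omega
            _ = ∑ i', b i' := Finset.sum_erase_add Finset.univ b (Finset.mem_univ i)
        omega
      exact Nat.notMem_of_lt_sInf hlt hmem
    push_neg at hb'small
    rw [hsum']
    linarith

lemma greedy_pack (hS : 0 < S) (hc : ∀ i, 0 < c i ∧ c i ≤ S) (hnn : ∀ i, 1 ≤ nn i) :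
    ∀ (N : ℕ) (r : Fin m → ℕ), (∑ i, r i ≤ N) → (∀ i, r i ≤ k * nn i) →
    ∃ L : List (Fin m → ℕ),
      (∀ b ∈ L, ∀ i, b i ≤ nn i) ∧ (∀ b ∈ L, ∑ i, (b i : ℝ) * c i ≤ S) ∧
      (∀ i, (L.map (fun b => b i)).sum = r i) ∧
      ((L.length : ℝ) * (S / 2) ≤ ∑ i, (r i : ℝ) * c i + (k : ℝ) * (S / 2)) := by
  intro N
  induction N with
  | zero =>
    intro r hN hrk
    have hr0 : ∀ i, r i = 0 := by
      intro i
      have : r i ≤ ∑ i, r i := Finset.single_le_sum (fun i _ => Nat.zero_le _) (Finset.mem_univ i)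
      omega
    refine ⟨[], by simp, by simp, fun i => by simp [hr0 i], ?_⟩
    simp only [List.length_nil, Nat.cast_zero, zero_mul]
    have h1 : 0 ≤ ∑ i, (r i : ℝ) * c i :=
      Finset.sum_nonneg (fun i _ => mul_nonneg (Nat.cast_nonneg _) (le_of_lt (hc i).1))
    have h2 : 0 ≤ (k : ℝ) * (S / 2) := mul_nonneg (Nat.cast_nonneg _) (by linarith)
    linarith
  | succ N ih =>
    intro r hN hrk
    classical
    set d : Fin m → ℕ := fun i => min (r i) (nn i) with hd
    by_cases hsml : ∑ i, (d i : ℝ) * c i ≤ S / 2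
    · -- pack everything into at most k bins
      set μ := Finset.univ.sup (fun i => (r i + nn i - 1) / nn i) with hμ
      have hqle : ∀ i, (r i + nn i - 1) / nn i ≤ μ := by
        intro i
        rw [hμ]
        exact Finset.le_sup (f := fun i => (r i + nn i - 1) / nn i) (Finset.mem_univ i)
      have hrμ : ∀ i, r i ≤ μ * nn i := by
        intro i
        have h1 : (r i + nn i - 1) / nn i ≤ μ := hqle i
        have h2 := Nat.div_add_mod (r i + nn i - 1) (nn i)
        have h3 : (r i + nn i - 1) % nn i < nn i := Nat.mod_lt _ (hnn i)
        have h4 : nn i * ((r i + nn i - 1) / nn i) ≤ nn i * μ := Nat.mul_le_mul_left _ h1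
        have h5 := hnn i
        have h9 : nn i * μ = μ * nn i := Nat.mul_comm _ _
        omega
      have hμk : μ ≤ k := by
        apply Finset.sup_le
        intro i _
        have h2 := Nat.div_add_mod (r i + nn i - 1) (nn i)
        have h3 : (r i + nn i - 1) % nn i < nn i := Nat.mod_lt _ (hnn i)
        have h5 := hnn i
        have h6 := hrk i
        by_contra hcon
        push_neg at hcon
        have h7 : nn i * (k + 1) ≤ nn i * ((r i + nn i - 1) / nn i) :=
          Nat.mul_le_mul_left _ hcon
        have h8 : k * nn i = nn i * k := Nat.mul_comm _ _
        have h11 : nn i * (k + 1) = nn i * k + nn i := by ring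
        omega
      set L : List (Fin m → ℕ) :=
        (List.range μ).map (fun ℓ => fun i => r i / μ + if ℓ < r i % μ then 1 else 0) with hL
      have hmemL : ∀ b ∈ L, ∃ ℓ, ℓ < μ ∧
          b = fun i => r i / μ + if ℓ < r i % μ then 1 else 0 := by
        intro b hb
        rw [hL, List.mem_map] at hb
        obtain ⟨ℓ, hℓ, hrfl⟩ := hb
        exact ⟨ℓ, List.mem_range.mp hℓ, hrfl.symm⟩
      have hbd : ∀ b ∈ L, ∀ i, b i ≤ d i := by
        intro b hb i
        obtain ⟨ℓ, hℓμ, rfl⟩ := hmemL b hb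
        have h2 := Nat.div_add_mod (r i) μ
        have h4 := hrμ i
        have hqr : μ * (r i / μ) ≤ r i := by omega
        by_cases hite : ℓ < r i % μ
        · simp only [if_pos hite]
          have hmod : 1 ≤ r i % μ := by omega
          have hμ1 : 1 ≤ μ := by omega
          have hq1 : r i / μ ≤ μ * (r i / μ) := Nat.le_mul_of_pos_left _ hμ1
          -- show r i / μ + 1 ≤ min (r i) (nn i)
          have hle_r : r i / μ + 1 ≤ r i := by omega
          have hle_n : r i / μ + 1 ≤ nn i := by
            by_contra hcon
            push_neg at hcon
            have : nn i ≤ r i / μ := by omega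
            have : μ * nn i ≤ μ * (r i / μ) := Nat.mul_le_mul_left _ this
            omega
          have hd2 : d i = min (r i) (nn i) := rfl
          omega
        · simp only [if_neg hite]
          have h6 : r i / μ ≤ r i := Nat.div_le_self _ _
          have hle_n : r i / μ ≤ nn i := by
            rcases Nat.eq_zero_or_pos μ with h0 | hpos
            · rw [h0]; simp
            · by_contra hcon
              push_neg at hcon
              have : nn i + 1 ≤ r i / μ := by omega
              have h7 : μ * (nn i + 1) ≤ μ * (r i / μ) := Nat.mul_le_mul_left _ this
              have h8 : μ * nn i + μ = μ * (nn i + 1) := by ring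
              omega
          have hd2 : d i = min (r i) (nn i) := rfl
          omega
      refine ⟨L, ?_, ?_, ?_, ?_⟩
      · intro b hb i
        have h1 : b i ≤ min (r i) (nn i) := hbd b hb i
        omega
      · intro b hb
        calc ∑ i, (b i : ℝ) * c i ≤ ∑ i, (d i : ℝ) * c i := by
              apply Finset.sum_le_sum
              intro i _
              apply mul_le_mul_of_nonneg_right _ (le_of_lt (hc i).1)
              exact_mod_cast hbd b hb i
          _ ≤ S / 2 := hsml
          _ ≤ S := by linarith
      · intro i
        rw [hL, List.map_map, list_range_map_sum]
        simp only [Function.comp]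
        have : ∑ ℓ ∈ Finset.range μ, (r i / μ + if ℓ < r i % μ then 1 else 0)
            = μ * (r i / μ) + ∑ ℓ ∈ Finset.range μ, (if ℓ < r i % μ then 1 else 0) := by
          rw [Finset.sum_add_distrib, Finset.sum_const, Finset.card_range, smul_eq_mul]
        rw [this]
        have hcount : ∑ ℓ ∈ Finset.range μ, (if ℓ < r i % μ then 1 else 0) = r i % μ := by
          rcases Nat.eq_zero_or_pos μ with h0 | hpos
          · rw [h0]
            simp only [Finset.range_zero, Finset.sum_empty]
            have h5 := hrμ i
            rw [h0] at h5
            omega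
          · have hlt : r i % μ ≤ μ := le_of_lt (Nat.mod_lt _ hpos)
            have he1 : ∑ ℓ ∈ Finset.range μ, (if ℓ < r i % μ then 1 else 0)
                = ((Finset.range μ).filter (fun ℓ => ℓ < r i % μ)).card :=
              (Finset.card_filter _ _).symm
            have he2 : (Finset.range μ).filter (fun ℓ => ℓ < r i % μ)
                = Finset.range (r i % μ) := by
              ext ℓ
              simp only [Finset.mem_filter, Finset.mem_range]
              omega
            rw [he1, he2, Finset.card_range]
        rw [hcount]
        exact Nat.div_add_mod (r i) μ
      · have hlen : L.length = μ := by rw [hL]; simp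
        rw [hlen]
        have h1 : 0 ≤ ∑ i, (r i : ℝ) * c i :=
          Finset.sum_nonneg (fun i _ => mul_nonneg (Nat.cast_nonneg _) (le_of_lt (hc i).1))
        have h2 : (μ : ℝ) ≤ (k : ℝ) := by exact_mod_cast hμk
        have h3 : 0 < S / 2 := by linarith
        nlinarith
    · -- extract a more-than-half-full bin
      push_neg at hsml
      obtain ⟨b, hbd, hbbig, hble⟩ := extract_bin hS hc d hsml
      set r' : Fin m → ℕ := fun i => r i - b i with hr'
      have hbr : ∀ i, b i ≤ r i := by
        intro i
        have h1 : b i ≤ min (r i) (nn i) := hbd i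
        omega
      have hbnn : ∀ i, b i ≤ nn i := by
        intro i
        have h1 : b i ≤ min (r i) (nn i) := hbd i
        omega
      have hbpos : ∃ i, 1 ≤ b i := by
        by_contra hcon
        push_neg at hcon
        have : ∀ i, b i = 0 := fun i => by have := hcon i; omega
        have hz : ∑ i, (b i : ℝ) * c i = 0 :=
          Finset.sum_eq_zero (fun i _ => by rw [this i]; norm_num)
        rw [hz] at hbbig
        linarith
      have hsum' : ∑ i, r' i ≤ N := by
        obtain ⟨i₀, hi₀⟩ := hbpos
        have h1 : ∑ i, r' i + ∑ i, b i = ∑ i, r i := by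
          rw [← Finset.sum_add_distrib]
          apply Finset.sum_congr rfl
          intro i _
          have h3 : r' i = r i - b i := rfl
          have h4 := hbr i
          omega
        have h2 : 1 ≤ ∑ i, b i :=
          le_trans hi₀ (Finset.single_le_sum (fun i _ => Nat.zero_le _) (Finset.mem_univ i₀))
        omega
      have hrk' : ∀ i, r' i ≤ k * nn i := by
        intro i
        have h3 : r' i = r i - b i := rfl
        have h4 := hrk i
        omega
      obtain ⟨L', hL1, hL2, hL3, hL4⟩ := ih r' hsum' hrk'
      refine ⟨b :: L', ?_, ?_, ?_, ?_⟩
      · intro b' hb'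
        rcases List.mem_cons.mp hb' with h | h
        · subst h; exact hbnn
        · exact hL1 b' h
      · intro b' hb'
        rcases List.mem_cons.mp hb' with h | h
        · subst h; exact hble
        · exact hL2 b' h
      · intro i
        simp only [List.map_cons, List.sum_cons, hL3 i]
        have h3 : r' i = r i - b i := rfl
        have h4 := hbr i
        omega
      · have hcast : ∑ i, (r' i : ℝ) * c i = ∑ i, (r i : ℝ) * c i - ∑ i, (b i : ℝ) * c i := by
          rw [← Finset.sum_sub_distrib]
          apply Finset.sum_congr rfl
          intro i _
          have hcast2 : ((r' i : ℕ) : ℝ) = (r i : ℝ) - (b i : ℝ) := by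
            rw [hr']
            push_cast [Nat.cast_sub (hbr i)]
            ring
          rw [hcast2]
          ring
        simp only [List.length_cons, Nat.cast_add, Nat.cast_one]
        rw [add_mul, one_mul]
        rw [hcast] at hL4
        linarith

end Greedy

/-- The `k`-times bin-packing optimum for the instance with `nn i` items of size
`c i` (items are the pairs `⟨i, copy⟩`): the minimum number `q` of bins
`B : Fin q → Finset ((i : Fin m) × Fin (nn i))` with each bin of total size at most
`S` and each item in exactly `k` bins. -/
noncomputable def kOPTSig (m : ℕ) (nn : Fin m → ℕ) (c : Fin m → ℝ) (S : ℝ)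
    (k : ℕ) : ℕ :=
  sInf {q | ∃ B : Fin q → Finset ((i : Fin m) × Fin (nn i)),
    (∀ j, ∑ it ∈ B j, c it.1 ≤ S) ∧
    (∀ it : (i : Fin m) × Fin (nn i),
      (Finset.univ.filter fun j => it ∈ B j).card = k)}

/-- `LIN(D_k)`: the optimal value of the fractional configuration linear program
for `k`-times bin packing: minimize `1·x` over real `x ≥ 0` supported on the
feasible configurations (vectors `a : Fin m → ℕ` with `a i ≤ nn i` and
`∑ a i · c i ≤ S`) subject to `∑_a x a · a i = k · nn i` for every `i`. -/
noncomputable def kLIN (m : ℕ) (nn : Fin m → ℕ) (c : Fin m → ℝ) (S : ℝ)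
    (k : ℕ) : ℝ :=
  sInf {v : ℝ | ∃ x : (Fin m → ℕ) → ℝ,
    (∀ a, 0 ≤ x a) ∧
    (∀ a, x a ≠ 0 → (∀ i, a i ≤ nn i) ∧ ∑ i, (a i : ℝ) * c i ≤ S) ∧
    (Function.support x).Finite ∧
    (∀ i, ∑ᶠ a, x a * (a i : ℝ) = (k : ℝ) * (nn i : ℝ)) ∧
    v = ∑ᶠ a, x a}

/-- For distinct sizes `c i ∈ (0,S]` with multiplicities `nn i ≥ 1`
and `k ≥ 1`:
`V(D_k) ≤ S·LIN(D_k) ≤ S·OPT(D_k) ≤ S·LIN(D_k) + S·(m + k)/2`,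
where `V(D_k) = k·∑ nn i · c i`. -/
theorem stmt_18 (m : ℕ) (S : ℝ) (hS : 0 < S) (c : Fin m → ℝ)
    (hc : ∀ i, 0 < c i ∧ c i ≤ S) (hcinj : Function.Injective c)
    (nn : Fin m → ℕ) (hnn : ∀ i, 1 ≤ nn i) (k : ℕ) (hk : 1 ≤ k) :
    (k : ℝ) * ∑ i, (nn i : ℝ) * c i ≤ S * kLIN m nn c S k ∧
    S * kLIN m nn c S k ≤ S * (kOPTSig m nn c S k : ℝ) ∧
    S * (kOPTSig m nn c S k : ℝ) ≤ S * kLIN m nn c S k + S * ((m : ℝ) + k) / 2 := by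
  classical
  set OPTset : Set ℕ := {q | ∃ B : Fin q → Finset ((i : Fin m) × Fin (nn i)),
    (∀ j, ∑ it ∈ B j, c it.1 ≤ S) ∧
    (∀ it : (i : Fin m) × Fin (nn i),
      (Finset.univ.filter fun j => it ∈ B j).card = k)} with hOset
  set LINset : Set ℝ := {v : ℝ | ∃ x : (Fin m → ℕ) → ℝ,
    (∀ a, 0 ≤ x a) ∧
    (∀ a, x a ≠ 0 → (∀ i, a i ≤ nn i) ∧ ∑ i, (a i : ℝ) * c i ≤ S) ∧
    (Function.support x).Finite ∧
    (∀ i, ∑ᶠ a, x a * (a i : ℝ) = (k : ℝ) * (nn i : ℝ)) ∧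
    v = ∑ᶠ a, x a} with hLset
  have hOdef : kOPTSig m nn c S k = sInf OPTset := rfl
  have hLdef : kLIN m nn c S k = sInf LINset := rfl
  have hOPTne : OPTset.Nonempty := opt_nonempty hnn hc
  have hOPTmem : kOPTSig m nn c S k ∈ OPTset := by rw [hOdef]; exact Nat.sInf_mem hOPTne
  obtain ⟨B, hB1, hB2⟩ := hOPTmem
  obtain ⟨x₀, hx₀0, hx₀1, hx₀2, hx₀3, hx₀4⟩ := packing_mem_lin _ B hB1 hB2
  have hLINmemOPT : ((kOPTSig m nn c S k : ℕ) : ℝ) ∈ LINset :=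
    ⟨x₀, hx₀0, hx₀1, hx₀2, hx₀3, hx₀4⟩
  have hLINne : LINset.Nonempty := ⟨_, hLINmemOPT⟩
  have hlb : ∀ v ∈ LINset, (k : ℝ) * ∑ i, (nn i : ℝ) * c i ≤ S * v ∧ 0 ≤ v := by
    rintro v ⟨x, h0, h1, h2, h3, rfl⟩
    exact lin_member_lb hS x h0 h1 h2 h3
  have hbdd : BddBelow LINset := ⟨0, fun v hv => (hlb v hv).2⟩
  have hLIN_lb : (k : ℝ) * ∑ i, (nn i : ℝ) * c i ≤ S * sInf LINset := by
    have h1 : ((k : ℝ) * ∑ i, (nn i : ℝ) * c i) / S ≤ sInf LINset := by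
      apply le_csInf hLINne
      intro v hv
      rw [div_le_iff₀ hS]
      have := (hlb v hv).1
      linarith
    calc (k : ℝ) * ∑ i, (nn i : ℝ) * c i
        = S * (((k : ℝ) * ∑ i, (nn i : ℝ) * c i) / S) := by field_simp
      _ ≤ S * sInf LINset := mul_le_mul_of_nonneg_left h1 (le_of_lt hS)
  have hineq2 : sInf LINset ≤ (kOPTSig m nn c S k : ℝ) := csInf_le hbdd hLINmemOPT
  have hineq3 : (kOPTSig m nn c S k : ℝ) ≤ sInf LINset + ((m : ℝ) + k) / 2 := by
    apply le_of_forall_pos_le_add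
    intro ε hε
    obtain ⟨v, hvmem, hvlt⟩ := Real.lt_sInf_add_pos hLINne hε
    obtain ⟨x, hx0, hx1, hx2, hx3, hveq⟩ := hvmem
    set T₀ := hx2.toFinset with hT₀
    have hsub : Function.support x ⊆ ↑T₀ := by rw [hT₀]; simp
    have hconsT : ∀ i, ∑ a ∈ T₀, x a * (a i : ℝ) = (k : ℝ) * (nn i : ℝ) := by
      intro i
      rw [← hx3 i]
      symm
      apply finsum_eq_finset_sum_of_support_subset
      intro a ha
      apply hsub
      intro h0
      apply ha
      simp only [Function.mem_support] at *
      rw [h0, zero_mul]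
    have hvT : v = ∑ a ∈ T₀, x a := by
      rw [hveq]
      exact finsum_eq_finset_sum_of_support_subset _ hsub
    obtain ⟨x', T', hT'card, hsupp', hpos', hnneg', hfeas', hnz', hcons', hval'⟩ :=
      support_reduce T₀.card x T₀ le_rfl hsub hx0 hx1 hconsT
    set flr : (Fin m → ℕ) → ℕ := fun a => ⌊x' a⌋₊ with hflr
    set F := T'.filter (fun a => (flr a : ℝ) < x' a) with hF
    set φ := ∑ a ∈ F, (x' a - (flr a : ℝ)) with hφ
    have hFsub : F ⊆ T' := Finset.filter_subset _ _
    have hfloor_le : ∀ a, (flr a : ℝ) ≤ x' a := fun a => Nat.floor_le (hnneg' a)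
    have hfrac0 : ∀ a ∈ T', a ∉ F → x' a - (flr a : ℝ) = 0 := by
      intro a ha hnF
      have h1 : ¬ ((flr a : ℝ) < x' a) := by
        intro hlt
        exact hnF (Finset.mem_filter.mpr ⟨ha, hlt⟩)
      have h2 := hfloor_le a
      linarith
    have hφ0 : 0 ≤ φ := by
      rw [hφ]
      exact Finset.sum_nonneg (fun a ha => by have := hfloor_le a; linarith)
    have hfcolle : ∀ i, ∑ a ∈ T', flr a * a i ≤ k * nn i := by
      intro i
      have hcast : ((∑ a ∈ T', flr a * a i : ℕ) : ℝ) ≤ ((k * nn i : ℕ) : ℝ) := by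
        push_cast
        rw [← hcons' i]
        apply Finset.sum_le_sum
        intro a ha
        exact mul_le_mul_of_nonneg_right (hfloor_le a) (Nat.cast_nonneg _)
      exact_mod_cast hcast
    set r : Fin m → ℕ := fun i => k * nn i - ∑ a ∈ T', flr a * a i with hr
    have hrcast : ∀ i, (r i : ℝ) = ∑ a ∈ F, (x' a - (flr a : ℝ)) * (a i : ℝ) := by
      intro i
      have h1 : (r i : ℝ) = ((k * nn i : ℕ) : ℝ) - ((∑ a ∈ T', flr a * a i : ℕ) : ℝ) := by
        have : r i = k * nn i - ∑ a ∈ T', flr a * a i := rfl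
        rw [this, Nat.cast_sub (hfcolle i)]
      rw [h1]
      push_cast
      rw [← hcons' i]
      rw [← Finset.sum_sub_distrib]
      have h2 : ∑ a ∈ T', (x' a * (a i : ℝ) - (flr a : ℝ) * (a i : ℝ))
          = ∑ a ∈ T', (x' a - (flr a : ℝ)) * (a i : ℝ) := by
        apply Finset.sum_congr rfl
        intro a _
        ring
      rw [h2]
      symm
      apply Finset.sum_subset hFsub
      intro a ha hna
      rw [hfrac0 a ha hna, zero_mul]
    have hrsize : ∑ i, (r i : ℝ) * c i ≤ S * φ := by
      have h1 : ∑ i, (r i : ℝ) * c i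
          = ∑ a ∈ F, (x' a - (flr a : ℝ)) * (∑ i, (a i : ℝ) * c i) := by
        have e1 : ∀ i ∈ Finset.univ, (r i : ℝ) * c i
            = ∑ a ∈ F, (x' a - (flr a : ℝ)) * (a i : ℝ) * c i := by
          intro i _
          rw [hrcast i, Finset.sum_mul]
        rw [Finset.sum_congr rfl e1, Finset.sum_comm]
        apply Finset.sum_congr rfl
        intro a _
        rw [Finset.mul_sum]
        apply Finset.sum_congr rfl
        intro i _
        ring
      rw [h1]
      have h2 : ∑ a ∈ F, (x' a - (flr a : ℝ)) * (∑ i, (a i : ℝ) * c i)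
          ≤ ∑ a ∈ F, (x' a - (flr a : ℝ)) * S := by
        apply Finset.sum_le_sum
        intro a ha
        have hfr : 0 ≤ x' a - (flr a : ℝ) := by have := hfloor_le a; linarith
        exact mul_le_mul_of_nonneg_left ((hfeas' a (hFsub ha)).2) hfr
      have h3 : ∑ a ∈ F, (x' a - (flr a : ℝ)) * S = S * φ := by
        rw [← Finset.sum_mul, hφ]
        exact mul_comm _ _
      linarith
    have hrk : ∀ i, r i ≤ k * nn i := fun i => Nat.sub_le _ _
    have hrF : ∀ i, r i ≤ ∑ a ∈ F, a i := by
      intro i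
      have hcast : (r i : ℝ) ≤ ((∑ a ∈ F, a i : ℕ) : ℝ) := by
        rw [hrcast i]
        push_cast
        apply Finset.sum_le_sum
        intro a ha
        have h1 : x' a - (flr a : ℝ) ≤ 1 := by
          have := Nat.lt_floor_add_one (x' a)
          rw [hflr]
          linarith
        calc (x' a - (flr a : ℝ)) * (a i : ℝ) ≤ 1 * (a i : ℝ) :=
              mul_le_mul_of_nonneg_right h1 (Nat.cast_nonneg _)
          _ = (a i : ℝ) := one_mul _
      exact_mod_cast hcast
    -- floor bins
    set Lf := T'.toList.flatMap (fun a => List.replicate (flr a) a) with hLf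
    have hLfmem : ∀ b ∈ Lf, b ∈ T' := by
      intro b hb
      rw [hLf, List.mem_flatMap] at hb
      obtain ⟨a, haT, hrep⟩ := hb
      rw [List.eq_of_mem_replicate hrep]
      exact Finset.mem_toList.mp haT
    have hLfcol : ∀ i, (Lf.map (fun b => b i)).sum = ∑ a ∈ T', flr a * a i := by
      intro i
      rw [hLf, List.map_flatMap, list_sum_flatMap]
      have e1 : (fun a : Fin m → ℕ => ((List.replicate (flr a) a).map (fun b => b i)).sum)
          = fun a => flr a * a i := by
        funext a
        rw [List.map_replicate, List.sum_replicate, smul_eq_mul]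
      rw [e1, list_sum_toList]
    have hLflen : (Lf.length : ℝ) = ∑ a ∈ T', (flr a : ℝ) := by
      rw [hLf, List.length_flatMap]
      have e1 : (List.length ∘ (fun a : Fin m → ℕ => List.replicate (flr a) a))
          = fun a => flr a := by
        funext a
        simp
      rw [show (fun a : Fin m → ℕ => (List.replicate (flr a) a).length) = fun a => flr a from e1, list_sum_toList]
      push_cast
      rfl
    have hsplit : ∑ a ∈ T', (flr a : ℝ) = ∑ a ∈ T', x' a - φ := by
      have e1 : φ = ∑ a ∈ T', (x' a - (flr a : ℝ)) := by
        rw [hφ]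
        exact Finset.sum_subset hFsub (fun a ha hna => hfrac0 a ha hna)
      rw [e1, Finset.sum_sub_distrib]
      ring
    -- residual bins
    have hp_le_m : (F.card : ℝ) ≤ (m : ℝ) := by
      exact_mod_cast le_trans (Finset.card_le_card hFsub) hT'card
    obtain ⟨Lr, hLr1, hLr2, hLr3, hLrlen⟩ :
        ∃ Lr : List (Fin m → ℕ),
          (∀ b ∈ Lr, ∀ i, b i ≤ nn i) ∧ (∀ b ∈ Lr, ∑ i, (b i : ℝ) * c i ≤ S) ∧
          (∀ i, (Lr.map (fun b => b i)).sum = r i) ∧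
          ((Lr.length : ℝ) ≤ φ + ((m : ℝ) + k) / 2) := by
      by_cases hcase : (F.card : ℝ) ≤ 2 * φ + k
      · obtain ⟨Lr, h1, h2, h3, h4⟩ := pbins hc F (fun a ha => hfeas' a (hFsub ha)) r hrF
        refine ⟨Lr, h1, h2, h3, ?_⟩
        have h5 : (Lr.length : ℝ) = (F.card : ℝ) := by exact_mod_cast h4
        rw [h5]
        linarith
      · push_neg at hcase
        obtain ⟨Lr, h1, h2, h3, h4⟩ := greedy_pack hS hc hnn (∑ i, r i) r le_rfl hrk
        refine ⟨Lr, h1, h2, h3, ?_⟩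
        have hS2 : 0 < S / 2 := by linarith
        have h5 : (Lr.length : ℝ) * (S / 2) ≤ (2 * φ + k) * (S / 2) := by
          calc (Lr.length : ℝ) * (S / 2) ≤ ∑ i, (r i : ℝ) * c i + (k : ℝ) * (S / 2) := h4
            _ ≤ S * φ + (k : ℝ) * (S / 2) := by linarith [hrsize]
            _ = (2 * φ + k) * (S / 2) := by ring
        have h6 : (Lr.length : ℝ) ≤ 2 * φ + k := le_of_mul_le_mul_right h5 hS2
        linarith
    -- combine floor and residual bins
    set L := Lf ++ Lr with hL
    have hcol : ∀ i, (L.map (fun b => b i)).sum = k * nn i := by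
      intro i
      rw [hL, List.map_append, List.sum_append, hLfcol i, hLr3 i]
      have h3 : r i = k * nn i - ∑ a ∈ T', flr a * a i := rfl
      rw [h3]
      exact Nat.add_sub_cancel' (hfcolle i)
    have hLb : ∀ b ∈ L, ∀ i, b i ≤ nn i := by
      intro b hb i
      rcases List.mem_append.mp hb with h | h
      · exact (hfeas' b (hLfmem b h)).1 i
      · exact hLr1 b h i
    have hLsz : ∀ b ∈ L, ∑ i, (b i : ℝ) * c i ≤ S := by
      intro b hb
      rcases List.mem_append.mp hb with h | h
      · exact (hfeas' b (hLfmem b h)).2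
      · exact hLr2 b h
    obtain ⟨B', hB'1, hB'2⟩ := realize_list hnn c S k L hLb hLsz hcol
    have hLmem : L.length ∈ OPTset := ⟨B', hB'1, hB'2⟩
    have hOPTle : kOPTSig m nn c S k ≤ L.length := by
      rw [hOdef]
      exact Nat.sInf_le hLmem
    have hval2 : ∑ a ∈ T', x' a ≤ v := by rw [hvT]; exact hval'
    have hlen : (L.length : ℝ) = (Lf.length : ℝ) + (Lr.length : ℝ) := by
      rw [hL, List.length_append]
      push_cast
      ring
    calc (kOPTSig m nn c S k : ℝ) ≤ (L.length : ℝ) := by exact_mod_cast hOPTle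
      _ = (Lf.length : ℝ) + (Lr.length : ℝ) := hlen
      _ ≤ (∑ a ∈ T', x' a - φ) + (φ + ((m : ℝ) + k) / 2) := by
          rw [hLflen, hsplit]
          linarith [hLrlen]
      _ = ∑ a ∈ T', x' a + ((m : ℝ) + k) / 2 := by ring
      _ ≤ v + ((m : ℝ) + k) / 2 := by linarith [hval2]
      _ ≤ sInf LINset + ((m : ℝ) + k) / 2 + ε := by linarith [hvlt]
  refine ⟨?_, ?_, ?_⟩
  · rw [hLdef]
    exact hLIN_lb
  · rw [hLdef]
    exact mul_le_mul_of_nonneg_left hineq2 (le_of_lt hS)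
  · rw [hLdef]
    calc S * (kOPTSig m nn c S k : ℝ)
        ≤ S * (sInf LINset + ((m : ℝ) + k) / 2) :=
          mul_le_mul_of_nonneg_left hineq3 (le_of_lt hS)
      _ = S * sInf LINset + S * ((m : ℝ) + k) / 2 := by ring
end

section
/- Let 0 < ε ≤ 1/2, S > 0, k ≥ 1, and let D be an instance of n(D) items with sizes in (0, S]. Call an item small if its size is at most max{1/n(D), ε}·S and large otherwise; let I and J be the small and large sub-instances. Apply linear grouping to J with group cardinality g = ⌈n(J)·ε²⌉, producing U' (the group of the g largest items) and U'' (the remaining groups with sizes rounded up to each group's maximum). Consider any packing of D_k obtained by the following procedure: (1) pack each item copy of U'_k into its own bin (at most g·k bins); (2) take a solution x ≥ 0 of the fractional configuration linear program for U''_k with value 1·x ≤ LIN(U''_k) + 1 and at most m(U'') nonzero coordinates, and round it to an integer solution using at most 1·x + (m(U'') + k)/2 bins; (3) reduce the rounded sizes back to obtain a packing of J_k; and (4) greedily add the small items of I_k, placing each copy in the first bin with enough remaining capacity not containing another copy of the same item and opening a new bin only when no such bin exists. Then the resulting k-times packing of D_k uses at most (1 + 2kε)·OPT(D_k) + 1/(2ε²)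 + 2k + 1 bins. -/
/-- One step of First-Fit insertion for `k`-times bin packing: insert (a copy of)
item `i` of size `d i` into the first bin that has enough remaining capacity and
does not already contain another copy of item `i`; open a new bin otherwise. -/
noncomputable def ffInsertF {n : ℕ} (d : Fin n → ℝ) (S : ℝ) (i : Fin n) :
    List (Finset (Fin n)) → List (Finset (Fin n))
  | [] => [{i}]
  | b :: bs =>
      if (∑ j ∈ b, d j) + d i ≤ S ∧ i ∉ b then insert i b :: bs
      else b :: ffInsertF d S i bs

/-- `OPT(D_k)`: the minimum number `q` of bins of a `k`-times packing of the
instance `d : Fin n → ℝ` with capacity `S`. -/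
noncomputable def kOPTF {n : ℕ} (d : Fin n → ℝ) (S : ℝ) (k : ℕ) : ℕ :=
  sInf {q | ∃ B : Fin q → Finset (Fin n),
    (∀ j, ∑ i ∈ B j, d i ≤ S) ∧
    (∀ i, (Finset.univ.filter fun j => i ∈ B j).card = k)}

/-- `LIN(E_k)`: the optimal value of the fractional configuration linear program
for `k`-times bin packing of the instance `e : Fin p → ℝ`, with configurations
given as subsets `C` of items of total size at most `S`: minimize `∑_C x C` over
real `x ≥ 0` supported on feasible configurations with
`∑_{C ∋ i} x C = k` for every item `i`. -/
noncomputable def kLINset {p : ℕ} (e : Fin p → ℝ) (S : ℝ) (k : ℕ) : ℝ :=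
  sInf {v : ℝ | ∃ x : Finset (Fin p) → ℝ,
    (∀ C, 0 ≤ x C) ∧
    (∀ C, x C ≠ 0 → ∑ i ∈ C, e i ≤ S) ∧
    (∀ i, ∑ C ∈ Finset.univ, (if i ∈ C then x C else 0) = (k : ℝ)) ∧
    v = ∑ C ∈ Finset.univ, x C}

namespace KKaux


variable {n : ℕ} (d : Fin n → ℝ) (S : ℝ)

lemma ffSpec (i : Fin n) (bs : List (Finset (Fin n))) :
    (∃ l1 b l2, bs = l1 ++ b :: l2 ∧
      ffInsertF d S i bs = l1 ++ insert i b :: l2 ∧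
      ((∑ j ∈ b, d j) + d i ≤ S ∧ i ∉ b)) ∨
    (ffInsertF d S i bs = bs ++ [{i}] ∧
      ∀ b' ∈ bs, ¬((∑ j ∈ b', d j) + d i ≤ S ∧ i ∉ b')) := by
  induction bs with
  | nil => right; exact ⟨rfl, by simp⟩
  | cons b bs ih =>
    by_cases h : (∑ j ∈ b, d j) + d i ≤ S ∧ i ∉ b
    · left; exact ⟨[], b, bs, rfl, by simp [ffInsertF, h], h⟩
    · rcases ih with ⟨l1, b', l2, h1, h2, h3⟩ | ⟨h1, h2⟩
      · left
        exact ⟨b :: l1, b', l2, by simp [h1], by simp [ffInsertF, h, h2], h3⟩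
      · right
        refine ⟨by simp [ffInsertF, h, h1], ?_⟩
        intro b' hb'
        rcases List.mem_cons.1 hb' with rfl | hb'
        · exact h
        · exact h2 b' hb'

/-- the key First-Fit invariant -/
def Pinv (L0 : ℕ) (t : ℝ) (bs : List (Finset (Fin n))) : Prop :=
  bs.length ≤ L0 ∨ ∃ i0 : Fin n, d i0 ≤ t ∧
    ∀ b' ∈ bs, S < (∑ j ∈ b', d j) + d i0 ∨ i0 ∈ b'

lemma Pinv_step (hd : ∀ i, 0 < d i) {L0 : ℕ} {t : ℝ} {i : Fin n} (hi : d i ≤ t)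
    {bs : List (Finset (Fin n))} (h : Pinv d S L0 t bs) :
    Pinv d S L0 t (ffInsertF d S i bs) := by
  rcases ffSpec d S i bs with ⟨l1, b, l2, h1, h2, h3, h4⟩ | ⟨h1, h2⟩
  · rcases h with hl | ⟨i0, hi0, hall⟩
    · left
      rw [h2]
      rw [h1] at hl
      simpa using hl
    · right
      refine ⟨i0, hi0, ?_⟩
      intro b' hb'
      rw [h2] at hb'
      have hins : ∑ j ∈ insert i b, d j = d i + ∑ j ∈ b, d j :=
        Finset.sum_insert h4
      rcases List.mem_append.1 hb' with hb1 | hb2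
      · exact hall b' (by rw [h1]; exact List.mem_append.2 (Or.inl hb1))
      · rcases List.mem_cons.1 hb2 with rfl | hb3
        · rcases hall b (by rw [h1]; simp) with hlt | hmem
          · left
            rw [hins]
            have := (hd i).le
            linarith
          · right; exact Finset.mem_insert_of_mem hmem
        · exact hall b' (by rw [h1]; simp [hb3])
  · right
    refine ⟨i, hi, ?_⟩
    intro b' hb'
    rw [h1] at hb'
    rcases List.mem_append.1 hb' with hb1 | hb2
    · have := h2 b' hb1
      push_neg at this
      by_cases hmem : i ∈ b'
      · exact Or.inr hmem
      · exact Or.inl (lt_of_not_ge fun hle => hmem (this hle))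
    · right
      simp at hb2
      simp [hb2]

lemma Pinv_foldl (hd : ∀ i, 0 < d i) {L0 : ℕ} {t : ℝ} (order : List (Fin n))
    (hord : ∀ i ∈ order, d i ≤ t) {bs : List (Finset (Fin n))}
    (h : Pinv d S L0 t bs) :
    Pinv d S L0 t (order.foldl (fun bs i => ffInsertF d S i bs) bs) := by
  induction order generalizing bs with
  | nil => simpa
  | cons a rest ih =>
    rw [List.foldl_cons]
    exact ih (fun i hi => hord i (List.mem_cons_of_mem a hi))
      (Pinv_step d S hd (hord a (by simp)) h)

lemma listsum_eq (bs : List (Finset (Fin n))) :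
    (bs.map fun b => ∑ j ∈ b, d j).sum =
      ∑ i, d i * ((bs.countP fun b => decide (i ∈ b) : ℕ) : ℝ) := by
  induction bs with
  | nil => simp
  | cons b bs ih =>
    simp only [List.map_cons, List.sum_cons, ih, List.countP_cons]
    have key : ∀ i : Fin n, d i *
        (((bs.countP fun b' => decide (i ∈ b')) + if decide (i ∈ b) = true then 1 else 0 : ℕ) : ℝ)
        = d i * ((bs.countP fun b' => decide (i ∈ b') : ℕ) : ℝ) + (if i ∈ b then d i else 0) := by
      intro i; by_cases h : i ∈ b <;> simp [h] <;> ring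
    rw [Finset.sum_congr rfl (fun i _ => key i), Finset.sum_add_distrib,
      Finset.sum_ite_mem, Finset.univ_inter, add_comm]

lemma sum_filter_le (p : Finset (Fin n) → Bool) (l : List (Finset (Fin n)))
    (h0 : ∀ b ∈ l, 0 ≤ ∑ j ∈ b, d j) :
    ((l.filter p).map fun b => ∑ j ∈ b, d j).sum ≤
      (l.map fun b => ∑ j ∈ b, d j).sum := by
  induction l with
  | nil => simp
  | cons b bs ih =>
    have h0' : ∀ b' ∈ bs, 0 ≤ ∑ j ∈ b', d j := fun b' hb' => h0 b' (by simp [hb'])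
    by_cases hp : p b
    · simp only [List.filter_cons, hp, if_pos, List.map_cons, List.sum_cons]
      simpa using ih h0'
    · simp only [List.filter_cons, hp]
      simp only [Bool.false_eq_true, if_false, List.map_cons, List.sum_cons]
      have := ih h0'
      have := h0 b (by simp)
      linarith

lemma const_le_listsum (c : ℝ) (l : List ℝ) (h : ∀ a ∈ l, c ≤ a) :
    c * l.length ≤ l.sum := by
  induction l with
  | nil => simp
  | cons a rest ih =>
    have h1 : c ≤ a := h a (by simp)
    have h2 := ih fun a ha => h a (by simp [ha])
    simp only [List.length_cons, List.sum_cons]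
    push_cast
    nlinarith [h2]

lemma card_filter_fin_le {N a : ℕ} (ha : a < N) :
    ((Finset.univ.filter fun j : Fin N => j.val ≤ a)).card = a + 1 := by
  have : ((Finset.univ.filter fun j : Fin N => j.val ≤ a)).card =
      (((Finset.univ.filter fun j : Fin N => j.val ≤ a)).image Fin.val).card := by
    rw [Finset.card_image_of_injective _ Fin.val_injective]
  rw [this]
  have himg : ((Finset.univ.filter fun j : Fin N => j.val ≤ a)).image Fin.val =
      Finset.range (a + 1) := by
    ext m
    simp only [Finset.mem_image, Finset.mem_filter, Finset.mem_univ, true_and,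
      Finset.mem_range]
    constructor
    · rintro ⟨j, hj, rfl⟩; omega
    · intro hm; exact ⟨⟨m, by omega⟩, Nat.lt_succ_iff.mp hm, rfl⟩
  rw [himg, Finset.card_range]

lemma ff_length_le (i : Fin n) (bs : List (Finset (Fin n))) :
    (ffInsertF d S i bs).length ≤ bs.length + 1 := by
  rcases ffSpec d S i bs with ⟨l1, b, l2, h1, h2, _⟩ | ⟨h1, _⟩
  · rw [h2, h1]; simp
  · simp [h1]

lemma ff_countP_self (i : Fin n) (bs : List (Finset (Fin n))) :
    ((ffInsertF d S i bs).countP fun b => decide (i ∈ b)) =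
      (bs.countP fun b => decide (i ∈ b)) + 1 := by
  rcases ffSpec d S i bs with ⟨l1, b, l2, h1, h2, h3, h4⟩ | ⟨h1, _⟩
  · rw [h2, h1]
    simp [List.countP_append, List.countP_cons, h4]
    omega
  · rw [h1]
    simp [List.countP_append, List.countP_cons]

lemma ff_countP_other {i j : Fin n} (hij : j ≠ i) (bs : List (Finset (Fin n))) :
    ((ffInsertF d S i bs).countP fun b => decide (j ∈ b)) =
      (bs.countP fun b => decide (j ∈ b)) := by
  rcases ffSpec d S i bs with ⟨l1, b, l2, h1, h2, _⟩ | ⟨h1, _⟩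
  · rw [h2, h1]
    simp [List.countP_append, List.countP_cons, Finset.mem_insert, hij]
  · rw [h1]
    simp [List.countP_append, List.countP_cons, hij]

lemma foldl_countP (order : List (Fin n)) (bs : List (Finset (Fin n))) (i : Fin n) :
    ((order.foldl (fun bs i => ffInsertF d S i bs) bs).countP fun b => decide (i ∈ b)) =
      (bs.countP fun b => decide (i ∈ b)) + order.count i := by
  induction order generalizing bs with
  | nil => simp
  | cons a rest ih =>
    rw [List.foldl_cons, ih, List.count_cons]
    by_cases hai : a = i
    · subst hai; rw [ff_countP_self]; simp; omega
    · rw [ff_countP_other d S (Ne.symm hai)]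
      simp [hai]

lemma foldl_length_le (order : List (Fin n)) (bs : List (Finset (Fin n))) :
    (order.foldl (fun bs i => ffInsertF d S i bs) bs).length ≤
      bs.length + order.length := by
  induction order generalizing bs with
  | nil => simp
  | cons a rest ih =>
    rw [List.foldl_cons]
    calc _ ≤ (ffInsertF d S a bs).length + rest.length := ih _
    _ ≤ bs.length + 1 + rest.length := by
        have := ff_length_le d S a bs; omega
    _ = bs.length + (a :: rest).length := by simp; omega



end KKaux
namespace KKaux

lemma card_filter_fin_le' {N a : ℕ} (ha : a < N) :
    ((Finset.univ.filter fun j : Fin N => j.val ≤ a)).card = a + 1 := by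
  have h1 : ((Finset.univ.filter fun j : Fin N => j.val ≤ a)).card =
      (((Finset.univ.filter fun j : Fin N => j.val ≤ a)).image Fin.val).card := by
    rw [Finset.card_image_of_injective _ Fin.val_injective]
  rw [h1]
  have himg : ((Finset.univ.filter fun j : Fin N => j.val ≤ a)).image Fin.val =
      Finset.range (a + 1) := by
    ext m
    simp only [Finset.mem_image, Finset.mem_filter, Finset.mem_univ, true_and,
      Finset.mem_range]
    constructor
    · rintro ⟨j, hj, rfl⟩; omega
    · intro hm; exact ⟨⟨m, by omega⟩, Nat.lt_succ_iff.mp hm, rfl⟩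
  rw [himg, Finset.card_range]

/-- a trivial `k`-times packing into `n*k` singleton bins -/
lemma kOPT_nonempty {n : ℕ} (d : Fin n → ℝ) (S : ℝ) (k : ℕ) (hk : 1 ≤ k)
    (hdS : ∀ i, d i ≤ S) :
    (n * k) ∈ {q | ∃ B : Fin q → Finset (Fin n),
      (∀ j, ∑ i ∈ B j, d i ≤ S) ∧
      (∀ i, (Finset.univ.filter fun j => i ∈ B j).card = k)} := by
  classical
  have hkpos : 0 < k := hk
  refine ⟨fun j => {⟨j.val / k, by
    have hj := j.isLt
    exact Nat.div_lt_of_lt_mul (Nat.lt_of_lt_of_eq hj (Nat.mul_comm n k))⟩},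
    fun j => by simpa using hdS _, fun i => ?_⟩
  have hset : (Finset.univ.filter fun j : Fin (n * k) =>
      i ∈ ({⟨j.val / k, by
        have hj := j.isLt
        exact Nat.div_lt_of_lt_mul (Nat.lt_of_lt_of_eq hj (Nat.mul_comm n k))⟩} :
        Finset (Fin n))) =
      Finset.univ.filter fun j : Fin (n * k) => j.val / k = i.val := by
    ext j
    simp only [Finset.mem_filter, Finset.mem_univ, true_and, Finset.mem_singleton]
    constructor
    · intro h; rw [h]
    · intro h; exact Fin.ext h.symm
  rw [hset]
  have h2 : ((Finset.univ.filter fun j : Fin (n * k) => j.val / k = i.val)).card =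
      (((Finset.univ.filter fun j : Fin (n * k) => j.val / k = i.val)).image Fin.val).card := by
    rw [Finset.card_image_of_injective _ Fin.val_injective]
  rw [h2]
  have himg : ((Finset.univ.filter fun j : Fin (n * k) => j.val / k = i.val)).image Fin.val =
      Finset.Ico (i.val * k) (i.val * k + k) := by
    ext m
    simp only [Finset.mem_image, Finset.mem_filter, Finset.mem_univ, true_and,
      Finset.mem_Ico]
    constructor
    · rintro ⟨j, hj, rfl⟩
      have hdm := Nat.div_add_mod j.val k
      have hmod := Nat.mod_lt j.val hkpos
      rw [hj] at hdm
      have hcomm : k * i.val = i.val * k := Nat.mul_comm _ _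
      constructor
      · omega
      · omega
    · intro ⟨h1, h2⟩
      have hi := i.isLt
      have hmlt : m < n * k := by
        calc m < i.val * k + k := h2
          _ = (i.val + 1) * k := by ring
          _ ≤ n * k := Nat.mul_le_mul_right k (by omega)
      refine ⟨⟨m, hmlt⟩, ?_, rfl⟩
      show m / k = i.val
      exact Nat.div_eq_of_lt_le h1
        (by rw [Nat.add_mul, Nat.one_mul]; exact h2)
  rw [himg, Nat.card_Ico]
  omega

lemma exists_injective_dominating {n N : ℕ} (d : Fin n → ℝ) (F : Finset (Fin n))
    (e : Fin N → ℝ)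
    (hcard : ∀ j : Fin N, (j : ℕ) + 1 ≤ (F.filter fun i => e j ≤ d i).card) :
    ∃ ι : Fin N → Fin n, Function.Injective ι ∧ ∀ j, ι j ∈ F ∧ e j ≤ d (ι j) := by
  classical
  set t : Fin N → Finset (Fin n) := fun j => F.filter fun i => e j ≤ d i with ht
  have hall : ∀ s : Finset (Fin N), s.card ≤ (s.biUnion t).card := by
    intro s
    rcases s.eq_empty_or_nonempty with rfl | hs
    · simp
    · have hjm : s.max' hs ∈ s := s.max'_mem hs
      have h1 : s.card ≤ (s.max' hs).val + 1 := by
        have hsub : s ⊆ Finset.univ.filter fun j : Fin N => j.val ≤ (s.max' hs).val := by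
          intro j hj
          simp only [Finset.mem_filter, Finset.mem_univ, true_and]
          exact Fin.le_def.mp (Finset.le_max' s j hj)
        calc s.card ≤ _ := Finset.card_le_card hsub
          _ = _ := card_filter_fin_le' (s.max' hs).isLt
      have h2 : t (s.max' hs) ⊆ s.biUnion t := Finset.subset_biUnion_of_mem t hjm
      calc s.card ≤ (s.max' hs).val + 1 := h1
        _ ≤ (t (s.max' hs)).card := hcard _
        _ ≤ _ := Finset.card_le_card h2
  obtain ⟨f, hfinj, hf⟩ := (Finset.all_card_le_biUnion_card_iff_exists_injective t).1 hall
  refine ⟨f, hfinj, fun j => ?_⟩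
  have := hf j
  rw [ht] at this
  simp only [Finset.mem_filter] at this
  exact this

lemma kLINset_le_packing {n N Q k : ℕ} (d : Fin n → ℝ) (S : ℝ) (e : Fin N → ℝ)
    (hd0 : ∀ i, 0 ≤ d i)
    (B : Fin Q → Finset (Fin n)) (hBfeas : ∀ j, ∑ i ∈ B j, d i ≤ S)
    (hBcount : ∀ i, (Finset.univ.filter fun j => i ∈ B j).card = k)
    (ι : Fin N → Fin n) (hinj : Function.Injective ι) (hle : ∀ j, e j ≤ d (ι j)) :
    kLINset e S k ≤ Q := by
  classical
  set Cf : Fin Q → Finset (Fin N) := fun jb => Finset.univ.filter fun i => ι i ∈ B jb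
    with hCf
  set x : Finset (Fin N) → ℝ :=
    fun C => ((Finset.univ.filter fun jb => Cf jb = C).card : ℝ) with hx
  apply csInf_le
  · refine ⟨0, fun v hv => ?_⟩
    obtain ⟨x', hx0, -, -, rfl⟩ := hv
    exact Finset.sum_nonneg fun C _ => hx0 C
  · refine ⟨x, fun C => Nat.cast_nonneg _, ?_, ?_, ?_⟩
    · -- feasibility
      intro C hC
      have hex : ∃ jb, Cf jb = C := by
        by_contra hno
        push_neg at hno
        apply hC
        rw [hx]
        simp only [Nat.cast_eq_zero, Finset.card_eq_zero]
        exact Finset.filter_eq_empty_iff.2 fun jb _ => hno jb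
      obtain ⟨jb, rfl⟩ := hex
      have hsub : (Cf jb).image ι ⊆ B jb := by
        intro i' hi'
        obtain ⟨i, hi, rfl⟩ := Finset.mem_image.1 hi'
        rw [hCf] at hi
        exact (Finset.mem_filter.1 hi).2
      calc ∑ i ∈ Cf jb, e i ≤ ∑ i ∈ Cf jb, d (ι i) :=
            Finset.sum_le_sum fun i _ => hle i
        _ = ∑ i' ∈ (Cf jb).image ι, d i' :=
            (Finset.sum_image fun a _ b _ h => hinj h).symm
        _ ≤ ∑ i' ∈ B jb, d i' :=
            Finset.sum_le_sum_of_subset_of_nonneg hsub fun i _ _ => hd0 i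
        _ ≤ S := hBfeas jb
    · -- coverage
      intro i
      have hkcard : (Finset.univ.filter fun jb => ι i ∈ B jb).card = k := hBcount (ι i)
      have hfib : (Finset.univ.filter fun jb => ι i ∈ B jb).card =
          ∑ C ∈ Finset.univ,
            ((Finset.univ.filter fun jb => ι i ∈ B jb).filter fun jb => Cf jb = C).card :=
        Finset.card_eq_sum_card_fiberwise fun jb _ => Finset.mem_univ _
      have hterm : ∀ C : Finset (Fin N),
          (((Finset.univ.filter fun jb => ι i ∈ B jb).filter fun jb => Cf jb = C).card : ℝ) =
            if i ∈ C then x C else 0 := by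
        intro C
        by_cases hiC : i ∈ C
        · rw [if_pos hiC, hx]
          congr 2
          ext jb
          simp only [Finset.mem_filter, Finset.mem_univ, true_and]
          constructor
          · exact fun h => h.2
          · intro h
            refine ⟨?_, h⟩
            have : i ∈ Cf jb := h ▸ hiC
            rw [hCf] at this
            exact (Finset.mem_filter.1 this).2
        · rw [if_neg hiC]
          norm_cast
          rw [Finset.card_eq_zero]
          refine Finset.filter_eq_empty_iff.2 ?_
          intro jb hjb
          intro hEq
          apply hiC
          rw [← hEq, hCf]
          simp only [Finset.mem_filter, Finset.mem_univ, true_and]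
          exact (Finset.mem_filter.1 hjb).2
      calc ∑ C ∈ Finset.univ, (if i ∈ C then x C else 0)
          = ∑ C ∈ Finset.univ,
            ((((Finset.univ.filter fun jb => ι i ∈ B jb).filter
              fun jb => Cf jb = C).card : ℕ) : ℝ) :=
            Finset.sum_congr rfl fun C _ => (hterm C).symm
        _ = (((Finset.univ.filter fun jb => ι i ∈ B jb).card : ℕ) : ℝ) := by
            rw [hfib]; push_cast; ring
        _ = (k : ℝ) := by rw [hkcard]
    · -- value
      have : (Finset.univ : Finset (Fin Q)).card =
          ∑ C ∈ Finset.univ, ((Finset.univ : Finset (Fin Q)).filter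
            fun jb => Cf jb = C).card :=
        Finset.card_eq_sum_card_fiberwise fun jb _ => Finset.mem_univ _
      rw [hx]
      have hQ: (Q:ℝ) = (((Finset.univ : Finset (Fin Q)).card : ℕ) : ℝ) := by simp
      rw [hQ, this]
      push_cast
      ring


lemma length_le_mul {n k : ℕ} (l : List (Fin n)) (h : ∀ i, l.count i ≤ k) :
    l.length ≤ n * k := by
  classical
  have h1 : l.length = ∑ a ∈ l.toFinset, l.count a :=
    (List.sum_toFinset_count_eq_length l).symm
  calc l.length = ∑ a ∈ l.toFinset, l.count a := h1
    _ ≤ ∑ _a ∈ l.toFinset, k := Finset.sum_le_sum fun a _ => h a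
    _ = l.toFinset.card * k := by rw [Finset.sum_const, smul_eq_mul]
    _ ≤ n * k := Nat.mul_le_mul_right k
        (le_trans (Finset.card_le_univ _) (by simp))


end KKaux

/-- Karmarkar–Karp Algorithm 1 extended to `k`BP: with small items
those of size `≤ max{1/n(D), ε}·S` and `J` the large items (`nJ` of them, sorted
nonincreasingly as `dJ`), linear grouping with `g = ⌈nJ·ε²⌉` producing `U'` (the
`g` largest items) and `U''` (the remaining groups rounded up to each group's
maximum), `m''` the number of distinct sizes of `U''`; a fractional solution `x` of
the configuration LP for `U''_k` with value `∑ x ≤ LIN(U''_k) + 1` and at most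
`m''` nonzero coordinates; `L1 ≤ g·k` bins for `U'_k`, an integral rounding of `x`
into `L2 ≤ ∑ x + (m'' + k)/2` bins, giving (after restoring the original sizes) a
packing `bins0` of `J_k` into `L1 + L2` bins; finally the small items added
greedily by First-Fit insertion.  Then the resulting packing of `D_k` uses at most
`(1 + 2kε)·OPT(D_k) + 1/(2ε²) + 2k + 1` bins. -/
theorem stmt_19 {n : ℕ} (d : Fin n → ℝ) (S ε : ℝ) (hS : 0 < S)
    (hε : 0 < ε ∧ ε ≤ 1/2) (hd : ∀ i, 0 < d i ∧ d i ≤ S) (k : ℕ) (hk : 1 ≤ k)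
    -- the large items, sorted in nonincreasing order
    (nJ : ℕ)
    (hnJ : nJ = (Finset.univ.filter
      fun i => max (1/(n : ℝ)) ε * S < d i).card)
    (dJ : Fin nJ → ℝ) (hdJanti : Antitone dJ)
    (hdJperm : Multiset.map dJ Finset.univ.val =
      Multiset.map d (Finset.univ.filter
        fun i => max (1/(n : ℝ)) ε * S < d i).val)
    -- the grouping parameter
    (g : ℕ) (hg : g = ⌈(nJ : ℝ) * ε ^ 2⌉₊)
    -- the rounded instance U'' (remaining groups, rounded up to group maxima)
    (U'' : Fin (nJ - g) → ℝ)
    (hU'' : U'' = fun j => dJ ⟨(j.val + g) / g * g,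
      Nat.lt_of_le_of_lt (Nat.div_mul_le_self _ _) (by have := j.isLt; omega)⟩)
    -- the number of distinct item sizes of U''
    (m'' : ℕ) (hm'' : m'' = (Finset.univ.image U'').card)
    -- step 2: a near-optimal solution of the fractional configuration LP for U''_k
    (x : Finset (Fin (nJ - g)) → ℝ)
    (hx0 : ∀ C, 0 ≤ x C)
    (hxfeas : ∀ C, x C ≠ 0 → ∑ i ∈ C, U'' i ≤ S)
    (hxcover : ∀ i, ∑ C ∈ Finset.univ, (if i ∈ C then x C else 0) = (k : ℝ))
    (hxval : ∑ C ∈ Finset.univ, x C ≤ kLINset U'' S k + 1)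
    (hxsupp : (Finset.univ.filter fun C => x C ≠ 0).card ≤ m'')
    -- steps 1-3: bins0 packs the large items of D, k copies each, into L1+L2 bins
    (L1 L2 : ℕ) (hL1 : L1 ≤ g * k)
    (hL2 : (L2 : ℝ) ≤ ∑ C ∈ Finset.univ, x C + ((m'' : ℝ) + k) / 2)
    (bins0 : List (Finset (Fin n))) (hlen : bins0.length = L1 + L2)
    (hfeas0 : ∀ b ∈ bins0, ∑ i ∈ b, d i ≤ S)
    (hlarge0 : ∀ i : Fin n, max (1/(n : ℝ)) ε * S < d i →
      (bins0.countP fun b => decide (i ∈ b)) = k)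
    (hsmall0 : ∀ i : Fin n, d i ≤ max (1/(n : ℝ)) ε * S →
      (bins0.countP fun b => decide (i ∈ b)) = 0)
    -- step 4: the small items, added greedily (k copies of each)
    (order : List (Fin n))
    (hordS : ∀ i : Fin n, d i ≤ max (1/(n : ℝ)) ε * S → order.count i = k)
    (hordL : ∀ i : Fin n, max (1/(n : ℝ)) ε * S < d i → order.count i = 0) :
    ((order.foldl (fun bs i => ffInsertF d S i bs) bins0).length : ℝ) ≤
      (1 + 2 * (k : ℝ) * ε) * (kOPTF d S k : ℝ) + 1 / (2 * ε ^ 2) +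
        (2 * (k : ℝ) + 1) := by
  classical
  obtain ⟨hε0, hε2⟩ := hε
  obtain ⟨OPT, hOPTdef⟩ : ∃ q, kOPTF d S k = q := ⟨_, rfl⟩
  rw [hOPTdef]
  -- an optimal packing
  have hmemtriv := KKaux.kOPT_nonempty d S k hk fun i => (hd i).2
  have hmem : kOPTF d S k ∈ {q | ∃ B : Fin q → Finset (Fin n),
      (∀ j, ∑ i ∈ B j, d i ≤ S) ∧
      (∀ i, (Finset.univ.filter fun j => i ∈ B j).card = k)} :=
    Nat.sInf_mem (⟨n * k, hmemtriv⟩ : Set.Nonempty _)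
  rw [hOPTdef] at hmem
  obtain ⟨Bopt, hBfeas, hBcount⟩ := hmem
  have hOPTle : OPT ≤ n * k := by rw [← hOPTdef]; exact Nat.sInf_le hmemtriv
  clear hmemtriv
  have hOPT0 : (0:ℝ) ≤ (OPT : ℝ) := Nat.cast_nonneg _
  have hk1 : (1:ℝ) ≤ (k : ℝ) := by exact_mod_cast hk
  have hepos2 : (0:ℝ) < 1 / (2 * ε ^ 2) := by positivity
  -- total weight bounds
  have hW_le : ∑ i, d i * (k : ℝ) ≤ (OPT : ℝ) * S := by
    have h1 : ∀ i : Fin n, d i * (k : ℝ) =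
        ∑ jb : Fin OPT, (if i ∈ Bopt jb then d i else 0) := by
      intro i
      rw [← Finset.sum_filter, Finset.sum_const, hBcount i, nsmul_eq_mul, mul_comm]
    calc ∑ i, d i * (k:ℝ)
        = ∑ i, ∑ jb : Fin OPT, (if i ∈ Bopt jb then d i else 0) :=
          Finset.sum_congr rfl fun i _ => h1 i
      _ = ∑ jb : Fin OPT, ∑ i, (if i ∈ Bopt jb then d i else 0) := Finset.sum_comm
      _ = ∑ jb : Fin OPT, ∑ i ∈ Bopt jb, d i := by
          refine Finset.sum_congr rfl fun jb _ => ?_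
          rw [Finset.sum_ite_mem, Finset.univ_inter]
      _ ≤ ∑ _jb : Fin OPT, S := Finset.sum_le_sum fun jb _ => hBfeas jb
      _ = (OPT : ℝ) * S := by simp [mul_comm]
  have hW_ge : (nJ : ℝ) * (ε * S) * k ≤ ∑ i, d i * (k : ℝ) := by
    have hsub : (nJ : ℝ) * (ε * S) ≤
        ∑ i ∈ (Finset.univ.filter fun i : Fin n => max (1/(n : ℝ)) ε * S < d i), d i := by
      have h1 : ∀ i ∈ (Finset.univ.filter fun i : Fin n => max (1/(n : ℝ)) ε * S < d i),
          ε * S ≤ d i := by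
        intro i hi
        have := (Finset.mem_filter.1 hi).2
        have hmax : ε * S ≤ max (1/(n : ℝ)) ε * S :=
          mul_le_mul_of_nonneg_right (le_max_right _ _) hS.le
        linarith only [this, hmax]
      have := Finset.card_nsmul_le_sum _ _ _ h1
      rw [← hnJ] at this
      simpa [nsmul_eq_mul] using this
    have hsub2 : ∑ i ∈ (Finset.univ.filter fun i : Fin n => max (1/(n : ℝ)) ε * S < d i), d i
        ≤ ∑ i, d i :=
      Finset.sum_le_sum_of_subset_of_nonneg (Finset.filter_subset _ _)
        fun i _ _ => (hd i).1.le
    have hm : (nJ : ℝ) * (ε * S) ≤ ∑ i, d i := le_trans hsub hsub2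
    have := mul_le_mul_of_nonneg_right hm (by positivity : (0:ℝ) ≤ (k:ℝ))
    calc (nJ : ℝ) * (ε * S) * k ≤ (∑ i, d i) * k := this
      _ = ∑ i, d i * (k : ℝ) := by rw [Finset.sum_mul]
  have hOPTge : (nJ : ℝ) * ε * (k : ℝ) ≤ (OPT : ℝ) := by
    have h1 : ((nJ : ℝ) * ε * k) * S ≤ (OPT : ℝ) * S := by
      calc ((nJ : ℝ) * ε * k) * S = (nJ : ℝ) * (ε * S) * k := by ring
        _ ≤ ∑ i, d i * (k : ℝ) := hW_ge
        _ ≤ (OPT : ℝ) * S := hW_le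
    exact le_of_mul_le_mul_right h1 hS
  -- LIN(U''_k) ≤ OPT
  have hcard : ∀ j : Fin (nJ - g),
      (j : ℕ) + 1 ≤ (((Finset.univ.filter fun i : Fin n => max (1/(n : ℝ)) ε * S < d i)).filter
        fun i => U'' j ≤ d i).card := by
    intro j
    have hgpos : 0 < g := by
      by_contra hg0
      have hge : g = 0 := by omega
      have hnJ0 : nJ = 0 := by
        by_contra hnJ0
        have h1 : (0:ℝ) < (nJ : ℝ) * ε ^ 2 := by
          have h2 : (1:ℝ) ≤ (nJ:ℝ) := by exact_mod_cast Nat.one_le_iff_ne_zero.2 hnJ0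
          have h3 : (0:ℝ) < ε ^ 2 := by positivity
          nlinarith only [h2, h3]
        have := Nat.ceil_pos.mpr h1
        omega
      have := j.isLt
      omega
    have haval : (j.val + g) / g * g < nJ :=
      Nat.lt_of_le_of_lt (Nat.div_mul_le_self _ _) (by have := j.isLt; omega)
    have hUj : U'' j = dJ ⟨(j.val + g) / g * g, haval⟩ := by rw [hU'']
    have haj : j.val < (j.val + g) / g * g := by
      have h1 := Nat.lt_div_mul_add (a := j.val + g) hgpos
      omega
    have hcardeq : (((Finset.univ.filter fun i : Fin n => max (1/(n : ℝ)) ε * S < d i)).filter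
        fun i => U'' j ≤ d i).card
        = (Finset.univ.filter fun j' : Fin nJ => U'' j ≤ dJ j').card := by
      have e1 : ∀ (m : ℕ) (F : Finset (Fin m)) (p : Fin m → Prop) [DecidablePred p],
          (F.filter p).card = Multiset.card (F.val.filter p) := by
        intro m F p _
        rfl
      rw [e1, e1]
      have e2 := Multiset.countP_map d
        ((Finset.univ.filter fun i : Fin n => max (1/(n : ℝ)) ε * S < d i)).val
        (fun c => U'' j ≤ c)
      have e3 := Multiset.countP_map dJ (Finset.univ : Finset (Fin nJ)).val
        (fun c => U'' j ≤ c)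
      rw [← hdJperm] at e2
      rw [e3] at e2
      exact e2.symm
    rw [hcardeq]
    have hsubset : (Finset.univ.filter fun j' : Fin nJ => j'.val ≤ (j.val + g) / g * g) ⊆
        (Finset.univ.filter fun j' : Fin nJ => U'' j ≤ dJ j') := by
      intro j' hj'
      simp only [Finset.mem_filter, Finset.mem_univ, true_and] at hj' ⊢
      rw [hUj]
      exact hdJanti (by exact hj' : j' ≤ (⟨(j.val + g) / g * g, haval⟩ : Fin nJ))
    calc (j : ℕ) + 1 ≤ (j.val + g) / g * g + 1 := by omega
      _ = (Finset.univ.filter fun j' : Fin nJ => j'.val ≤ (j.val + g) / g * g).card :=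
          (KKaux.card_filter_fin_le' haval).symm
      _ ≤ _ := Finset.card_le_card hsubset
  obtain ⟨ι, hιinj, hι⟩ := KKaux.exists_injective_dominating d
    ((Finset.univ.filter fun i : Fin n => max (1/(n : ℝ)) ε * S < d i)) U'' hcard
  have hLIN : kLINset U'' S k ≤ (OPT : ℝ) :=
    KKaux.kLINset_le_packing d S U'' (fun i => (hd i).1.le) Bopt hBfeas hBcount ι hιinj
      fun j => (hι j).2
  have hxval2 : ∑ C ∈ Finset.univ, x C ≤ (OPT : ℝ) + 1 := by
    linarith only [hxval, hLIN]
  clear hxval hLIN hOPTdef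
  -- bound on the number of distinct sizes
  have hm''R : (m'' : ℝ) * ε ^ 2 ≤ 1 := by
    rcases Nat.eq_zero_or_pos nJ with hnJ0 | hnJpos
    · have hempty : IsEmpty (Fin (nJ - g)) := ⟨fun j => absurd j.isLt (by omega)⟩
      have : m'' = 0 := by
        rw [hm'', Finset.univ_eq_empty, Finset.image_empty, Finset.card_empty]
      rw [this]
      norm_num
    · have hgpos : 0 < g := by
        rw [hg]
        apply Nat.ceil_pos.mpr
        have h2 : (1:ℝ) ≤ (nJ:ℝ) := by exact_mod_cast hnJpos
        have h3 : (0:ℝ) < ε ^ 2 := by positivity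
        nlinarith only [h2, h3]
      set f : Fin (nJ - g) → ℕ := fun j => (j.val + g) / g with hf
      set h : ℕ → ℝ := fun q => if hq : q * g < nJ then dJ ⟨q * g, hq⟩ else 0 with hh
      have hfact : U'' = h ∘ f := by
        funext j
        have haval : (j.val + g) / g * g < nJ :=
          Nat.lt_of_le_of_lt (Nat.div_mul_le_self _ _) (by have := j.isLt; omega)
        rw [hU'']
        simp only [Function.comp_apply, hh, hf]
        rw [dif_pos haval]
      have hcard1 : m'' ≤ (Finset.univ.image f).card := by
        rw [hm'', hfact, ← Finset.image_image]
        exact Finset.card_image_le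
      have hcard2 : (Finset.univ.image f) ⊆ Finset.Icc 1 ((nJ - 1) / g) := by
        intro q hq
        obtain ⟨j, _, rfl⟩ := Finset.mem_image.1 hq
        rw [Finset.mem_Icc]
        constructor
        · have : g / g ≤ (j.val + g) / g := Nat.div_le_div_right (by omega)
          rwa [Nat.div_self hgpos] at this
        · exact Nat.div_le_div_right (by have := j.isLt; omega)
      have hm''le : m'' ≤ (nJ - 1) / g := by
        calc m'' ≤ (Finset.univ.image f).card := hcard1
          _ ≤ (Finset.Icc 1 ((nJ - 1) / g)).card := Finset.card_le_card hcard2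
          _ = (nJ - 1) / g := by rw [Nat.card_Icc]; exact Nat.add_sub_cancel _ _
      have hmg : m'' * g ≤ nJ := by
        calc m'' * g ≤ ((nJ - 1) / g) * g := Nat.mul_le_mul_right g hm''le
          _ ≤ nJ - 1 := Nat.div_mul_le_self _ _
          _ ≤ nJ := by omega
      have hmgR : (m'' : ℝ) * (g : ℝ) ≤ (nJ : ℝ) := by exact_mod_cast hmg
      have hgeR : (nJ : ℝ) * ε ^ 2 ≤ (g : ℝ) := by rw [hg]; exact Nat.le_ceil _
      have hnJR : (1:ℝ) ≤ (nJ:ℝ) := by exact_mod_cast hnJpos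
      have hA : (m'':ℝ) * ((nJ:ℝ) * ε ^ 2) ≤ (m'':ℝ) * (g:ℝ) :=
        mul_le_mul_of_nonneg_left hgeR (Nat.cast_nonneg _)
      have hD : (nJ:ℝ) * ((m'':ℝ) * ε ^ 2) ≤ (nJ:ℝ) * 1 := by
        calc (nJ:ℝ) * ((m'':ℝ) * ε ^ 2) = (m'':ℝ) * ((nJ:ℝ) * ε ^ 2) := by ring
          _ ≤ (m'':ℝ) * (g:ℝ) := hA
          _ ≤ (nJ:ℝ) := hmgR
          _ = (nJ:ℝ) * 1 := by ring
      exact le_of_mul_le_mul_left hD (by linarith only [hnJR])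
  have hm''le : (m'' : ℝ) ≤ 1 / ε ^ 2 := by
    rw [le_div_iff₀ (by positivity)]
    exact hm''R
  -- Case A bound on bins0
  have hgR : (g : ℝ) ≤ (nJ : ℝ) * ε ^ 2 + 1 := by
    rw [hg]
    exact le_of_lt (Nat.ceil_lt_add_one (by positivity))
  have hL1R : (L1 : ℝ) ≤ ε * (OPT : ℝ) + k := by
    have h1 : (L1 : ℝ) ≤ (g : ℝ) * k := by exact_mod_cast hL1
    have h2 : (g : ℝ) * k ≤ ((nJ : ℝ) * ε ^ 2 + 1) * k :=
      mul_le_mul_of_nonneg_right hgR (by positivity)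
    have h3 : ((nJ : ℝ) * ε ^ 2 + 1) * k = ε * ((nJ:ℝ) * ε * k) + k := by ring
    have h4 : ε * ((nJ:ℝ) * ε * k) ≤ ε * (OPT : ℝ) :=
      mul_le_mul_of_nonneg_left hOPTge hε0.le
    linarith only [h1, h2, h3, h4]
  have hL2R : (L2 : ℝ) ≤ (OPT : ℝ) + 1 + ((m'' : ℝ) + k) / 2 := by linarith only [hL2, hxval2]
  have hbins0 : (bins0.length : ℝ) ≤
      (OPT : ℝ) + ε * (OPT : ℝ) + 1 / (2 * ε ^ 2) + (3/2) * k + 1 := by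
    have h1 : (bins0.length : ℝ) = (L1 : ℝ) + L2 := by rw [hlen]; push_cast; ring
    have h2 : ((m'' : ℝ) + k) / 2 ≤ 1 / (2 * ε ^ 2) + k / 2 := by
      have h3 : 1 / ε ^ 2 / 2 = 1 / (2 * ε ^ 2) := by ring
      linarith only [hm''le, h3]
    linarith only [h1, h2, hL1R, hL2R]
  -- run the First-Fit invariant
  have hsmall_ord : ∀ i ∈ order, d i ≤ max (1/(n : ℝ)) ε * S := by
    intro i hi
    by_contra hlt
    push_neg at hlt
    have h0 := hordL i hlt
    rw [List.count_eq_zero] at h0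
    exact h0 hi
  have hPfin : KKaux.Pinv d S bins0.length (max (1/(n : ℝ)) ε * S)
      (order.foldl (fun bs i => ffInsertF d S i bs) bins0) :=
    KKaux.Pinv_foldl d S (fun i => (hd i).1) order hsmall_ord (Or.inl le_rfl)
  set bs := order.foldl (fun bs i => ffInsertF d S i bs) bins0 with hbs
  rcases hPfin with hlenle | ⟨i0, hi0, hall⟩
  · -- no new bin was opened
    have h1 : (bs.length : ℝ) ≤ (bins0.length : ℝ) := Nat.cast_le.mpr hlenle
    have h2 : ε * (OPT : ℝ) ≤ 2 * k * ε * OPT := by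
      have h3 : 0 ≤ (ε * (OPT:ℝ)) * (2 * k - 1) :=
        mul_nonneg (mul_nonneg hε0.le hOPT0) (by linarith only [hk1])
      linarith only [h3]
    linarith only [h1, h2, hbins0, hepos2, hk1]
  · -- a new bin was opened: volume argument
    have hcount : ∀ i : Fin n, (bs.countP fun b => decide (i ∈ b)) = k := by
      intro i
      rw [hbs, KKaux.foldl_countP]
      rcases le_or_gt (d i) (max (1/(n : ℝ)) ε * S) with hsm | hlg
      · rw [hsmall0 i hsm, hordS i hsm, Nat.zero_add]
      · rw [hlarge0 i hlg, hordL i hlg]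
        exact Nat.add_zero k
    have hWsum : (bs.map fun b => ∑ j ∈ b, d j).sum = ∑ i, d i * (k : ℝ) := by
      rw [KKaux.listsum_eq]
      exact Finset.sum_congr rfl fun i _ => by rw [hcount i]
    set heavy := bs.filter (fun b => !(decide (i0 ∈ b))) with hheavy
    have hheavy_load : ∀ b ∈ heavy, S - max (1/(n : ℝ)) ε * S ≤ ∑ j ∈ b, d j := by
      intro b hb
      rw [hheavy, List.mem_filter] at hb
      obtain ⟨hbbs, hbnot⟩ := hb
      have hni : i0 ∉ b := by simpa using hbnot
      rcases hall b hbbs with hlt | hmem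
      · linarith only [hlt, hi0]
      · exact absurd hmem hni
    have hheavy_len : bs.length = heavy.length + k := by
      have h1 := List.length_eq_countP_add_countP (p := fun b => decide (i0 ∈ b)) (l := bs)
      rw [hcount i0] at h1
      have h2 : heavy.length = bs.countP fun b => !(decide (i0 ∈ b)) := by
        rw [hheavy]
        exact (List.countP_eq_length_filter).symm
      simp only [decide_not, Bool.decide_eq_true] at h1
      omega
    have hklen : (k : ℝ) ≤ (bs.length : ℝ) := by
      have : k ≤ bs.length := by omega
      exact_mod_cast this
    have hkey : (S - max (1/(n : ℝ)) ε * S) * ((bs.length : ℝ) - k) ≤ (OPT : ℝ) * S := by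
      have h2 : ((heavy.length : ℝ)) = (bs.length : ℝ) - k := by
        rw [hheavy_len]; push_cast; ring
      have hconst : (S - max (1/(n : ℝ)) ε * S) * ((heavy.map fun b => ∑ j ∈ b, d j).length : ℝ)
          ≤ (heavy.map fun b => ∑ j ∈ b, d j).sum := by
        apply KKaux.const_le_listsum
        intro a ha
        obtain ⟨b, hb, rfl⟩ := List.mem_map.1 ha
        exact hheavy_load b hb
      rw [List.length_map] at hconst
      have hfilter : (heavy.map fun b => ∑ j ∈ b, d j).sum ≤
          (bs.map fun b => ∑ j ∈ b, d j).sum := by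
        rw [hheavy]
        exact KKaux.sum_filter_le d _ bs fun b _ =>
          Finset.sum_nonneg fun j _ => (hd j).1.le
      rw [h2] at hconst
      calc (S - max (1/(n : ℝ)) ε * S) * ((bs.length : ℝ) - k)
          ≤ (heavy.map fun b => ∑ j ∈ b, d j).sum := hconst
        _ ≤ (bs.map fun b => ∑ j ∈ b, d j).sum := hfilter
        _ = ∑ i, d i * (k : ℝ) := hWsum
        _ ≤ (OPT : ℝ) * S := hW_le
    have hn1 : 1 ≤ n := i0.pos
    have hOPTk : (k : ℝ) ≤ (OPT : ℝ) := by
      have h1 : k ≤ OPT := by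
        rw [← hBcount i0]
        calc (Finset.univ.filter fun j => i0 ∈ Bopt j).card ≤ (Finset.univ : Finset (Fin OPT)).card :=
            Finset.card_filter_le _ _
          _ = OPT := by rw [Finset.card_univ, Fintype.card_fin]
      exact_mod_cast h1
    by_cases hn2 : 2 ≤ n
    · have hnR : (2:ℝ) ≤ (n : ℝ) := by exact_mod_cast hn2
      by_cases hτ : (1/(n : ℝ)) ≤ ε
      · -- threshold is ε S
        rw [max_eq_right hτ] at hkey
        have hL : (1 - ε) * ((bs.length : ℝ) - k) ≤ (OPT : ℝ) := by
          have h3 : ((1 - ε) * ((bs.length : ℝ) - k)) * S ≤ (OPT : ℝ) * S := by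
            have heq : ((1 - ε) * ((bs.length : ℝ) - k)) * S =
                (S - ε * S) * ((bs.length : ℝ) - k) := by ring
            rw [heq]; exact hkey
          exact le_of_mul_le_mul_right h3 hS
        have hLk : (bs.length : ℝ) - k ≤ (1 + 2*ε) * (OPT : ℝ) := by
          by_contra hcon
          push_neg at hcon
          have h5 : (1 - ε) * ((1 + 2*ε) * (OPT:ℝ)) < (1 - ε) * ((bs.length:ℝ) - k) :=
            mul_lt_mul_of_pos_left hcon (by linarith only [hε2] : (0:ℝ) < 1 - ε)
          have h7 : 0 ≤ (OPT:ℝ) * (ε * (1 - 2*ε)) :=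
            mul_nonneg hOPT0 (mul_nonneg hε0.le (by linarith only [hε2]))
          have h6 : (OPT:ℝ) ≤ (1 - ε) * ((1 + 2*ε) * (OPT:ℝ)) := by linarith only [h7]
          linarith only [h5, h6, hL]
        have h8 : 0 ≤ (ε * (OPT:ℝ)) * (2 * k - 2) :=
          mul_nonneg (mul_nonneg hε0.le hOPT0) (by linarith only [hk1])
        linarith only [hLk, h8, hepos2, hk1]
      · -- threshold is S/n
        push_neg at hτ
        rw [max_eq_left hτ.le] at hkey
        have hnpos : (0:ℝ) < (n : ℝ) := by linarith only [hnR]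
        have hL : ((n : ℝ) - 1) * ((bs.length : ℝ) - k) ≤ (n : ℝ) * (OPT : ℝ) := by
          have h3 : (((n : ℝ) - 1) * ((bs.length : ℝ) - k)) * S ≤ ((n : ℝ) * OPT) * S := by
            have heq : (((n : ℝ) - 1) * ((bs.length : ℝ) - k)) * S =
                ((S - 1/(n : ℝ) * S) * ((bs.length : ℝ) - k)) * n := by
              field_simp
            rw [heq]
            calc ((S - 1/(n : ℝ) * S) * ((bs.length : ℝ) - k)) * n
                ≤ ((OPT : ℝ) * S) * n := mul_le_mul_of_nonneg_right hkey hnpos.le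
              _ = ((n : ℝ) * OPT) * S := by ring
          exact le_of_mul_le_mul_right h3 hS
        have hOPTnk : (OPT : ℝ) ≤ (n : ℝ) * k := by exact_mod_cast hOPTle
        have hL3 : (bs.length : ℝ) ≤ (OPT : ℝ) + 3 * k := by
          by_contra hcon
          push_neg at hcon
          have h5 : ((n:ℝ) - 1) * ((OPT:ℝ) + 2*k) < ((n:ℝ) - 1) * ((bs.length:ℝ) - k) :=
            mul_lt_mul_of_pos_left (by linarith only [hcon]) (by linarith only [hnR])
          have h7 : 0 ≤ (k:ℝ) * ((n:ℝ) - 2) :=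
            mul_nonneg (by linarith only [hk1]) (by linarith only [hnR])
          have h6 : (n:ℝ) * (OPT:ℝ) ≤ ((n:ℝ) - 1) * ((OPT:ℝ) + 2*k) := by
            linarith only [hOPTnk, h7]
          linarith only [h5, h6, hL]
        by_cases hek : 1 ≤ 2 * ε * (k : ℝ)
        · have h6 : 0 ≤ (2*ε*(k:ℝ) - 1) * (OPT:ℝ) :=
            mul_nonneg (by linarith only [hek]) hOPT0
          have h5 : (OPT:ℝ) ≤ 2 * k * ε * OPT := by linarith only [h6]
          linarith only [hL3, h5, hOPTk, hepos2]
        · push_neg at hek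
          have h2 : (k : ℝ) ≤ 1 / (2 * ε ^ 2) := by
            rw [le_div_iff₀ (by positivity)]
            have h5 : (k:ℝ) * (2 * ε ^ 2) = (2*ε*(k:ℝ)) * ε := by ring
            rw [h5]
            calc (2*ε*(k:ℝ)) * ε ≤ 1 * ε :=
                mul_le_mul_of_nonneg_right (le_of_lt hek) hε0.le
              _ ≤ 1 := by linarith only [hε2]
          have h3 : (0:ℝ) ≤ 2 * k * ε * OPT := by positivity
          linarith only [hL3, h2, h3]
    · -- n = 1
      have hn1' : n = 1 := by omega
      have hnJ0 : nJ = 0 := by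
        rw [hnJ, Finset.card_eq_zero, Finset.filter_eq_empty_iff]
        intro i _
        rw [hn1']
        have hmax1 : max (1/((1:ℕ) : ℝ)) ε = 1 := by
          rw [Nat.cast_one]
          norm_num
          linarith only [hε2]
        rw [hmax1, one_mul]
        push_neg
        exact (hd i).2
      have hg0 : g = 0 := by rw [hg, hnJ0]; simp
      have hL10 : L1 = 0 := by
        have := hL1
        rw [hg0] at this
        omega
      have hempty : IsEmpty (Fin (nJ - g)) := ⟨fun j => absurd j.isLt (by omega)⟩
      have hm''0 : m'' = 0 := by
        rw [hm'', Finset.univ_eq_empty, Finset.image_empty, Finset.card_empty]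
      have hordlen : order.length ≤ n * k := by
        apply KKaux.length_le_mul
        intro i
        rcases le_or_gt (d i) (max (1/(n : ℝ)) ε * S) with hsm | hlg
        · rw [hordS i hsm]
        · rw [hordL i hlg]; omega
      have hlenb : bs.length ≤ bins0.length + order.length := by
        rw [hbs]
        exact KKaux.foldl_length_le d S order bins0
      have hlenb2 : (bs.length : ℝ) ≤ (L2 : ℝ) + k := by
        have h1 : bs.length ≤ L2 + k := by
          have h4 : order.length ≤ k := by
            calc order.length ≤ n * k := hordlen
              _ = 1 * k := by rw [hn1']
              _ = k := Nat.one_mul k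
          have h5 := hlen
          rw [hL10, Nat.zero_add] at h5
          omega
        exact_mod_cast h1
      have hL2R' : (L2 : ℝ) ≤ (OPT : ℝ) + 1 + (k : ℝ) / 2 := by
        rw [hm''0] at hL2
        push_cast at hL2
        linarith only [hL2, hxval2]
      have h3 : (0:ℝ) ≤ 2 * k * ε * OPT := by positivity
      linarith only [hlenb2, hL2R', h3, hepos2, hk1]
end
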